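/- arXiv:2305.16270 — 7 statements merged into one kernel-verified Lean document; each statement's English description precedes it below -/
import Mathlib

section
/- For a, b ≥ 1, setting u = a^a b^b/(a+b)^(a+b) and v = sqrt((a+b)/(ab)), the function f(t) = t^a(1-t)^b satisfies the linear lower bounds f(t) ≥ u((a+b)v t − a v + 1) for 0 < t < a/(a+b), and f(t) ≥ u(−(a+b)v t + a v + 1) for a/(a+b) < t < 1. -/
open Set

private lemma deriv1 {a b t : ℝ} (ha : 1 ≤ a) (hb : 1 ≤ b) (ht : 0 < t) (ht1 : t < 1) :
    HasDerivAt (fun x : ℝ => x ^ a * (1 - x) ^ b)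
      (a * t ^ (a - 1) * (1 - t) ^ b - b * t ^ a * (1 - t) ^ (b - 1)) t := by
  have h1 : HasDerivAt (fun x : ℝ => x ^ a) (a * t ^ (a - 1)) t :=
    Real.hasDerivAt_rpow_const (Or.inl ht.ne')
  have hs : HasDerivAt (fun x : ℝ => 1 - x) (-1) t := (hasDerivAt_id t).const_sub 1
  have h2 : HasDerivAt (fun x : ℝ => (1 - x) ^ b) (b * (1 - t) ^ (b - 1) * (-1)) t := by
    exact (Real.hasDerivAt_rpow_const (Or.inl (by linarith))).comp t hs
  have := h1.mul h2
  refine this.congr_deriv ?_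
  ring

private lemma deriv2 {a b t : ℝ} (ha : 1 ≤ a) (hb : 1 ≤ b) (ht : 0 < t) (ht1 : t < 1) :
    HasDerivAt (fun x : ℝ => a * x ^ (a - 1) * (1 - x) ^ b - b * x ^ a * (1 - x) ^ (b - 1))
      (a * (a - 1) * t ^ (a - 2) * (1 - t) ^ b - 2 * a * b * t ^ (a - 1) * (1 - t) ^ (b - 1)
        + b * (b - 1) * t ^ a * (1 - t) ^ (b - 2)) t := by
  have h1t : (1 : ℝ) - t > 0 := by linarith
  have hs : HasDerivAt (fun x : ℝ => 1 - x) (-1) t := (hasDerivAt_id t).const_sub 1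
  have hA : HasDerivAt (fun x : ℝ => x ^ (a - 1)) ((a - 1) * t ^ (a - 1 - 1)) t :=
    Real.hasDerivAt_rpow_const (Or.inl ht.ne')
  have hB : HasDerivAt (fun x : ℝ => (1 - x) ^ b) (b * (1 - t) ^ (b - 1) * (-1)) t :=
    (Real.hasDerivAt_rpow_const (Or.inl h1t.ne')).comp t hs
  have hC : HasDerivAt (fun x : ℝ => x ^ a) (a * t ^ (a - 1)) t :=
    Real.hasDerivAt_rpow_const (Or.inl ht.ne')
  have hD : HasDerivAt (fun x : ℝ => (1 - x) ^ (b - 1)) ((b - 1) * (1 - t) ^ (b - 1 - 1) * (-1)) t :=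
    (Real.hasDerivAt_rpow_const (Or.inl h1t.ne')).comp t hs
  have p1 := ((hA.const_mul a).mul hB)
  have p2 := ((hC.mul hD).const_mul b)
  have := p1.sub p2
  convert this using 1
  · rfl
  · rfl
  · funext x; simp only [Pi.mul_apply, Pi.sub_apply]; ring
  · rw [show a - 1 - 1 = a - 2 by ring, show b - 1 - 1 = b - 2 by ring]
    ring

private lemma quad_nonpos {a b v σ t : ℝ} (ha : 1 ≤ a) (hb : 1 ≤ b) (hv0 : 0 < v)
    (hv2 : v ^ 2 * (a * b) = a + b) (hσ : σ = ((a + b) * v)⁻¹)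
    (hlo : a / (a + b) - σ ≤ t) (hhi : t ≤ a / (a + b) + σ) :
    a * (a - 1) * (1 - t) ^ 2 - 2 * a * b * t * (1 - t) + b * (b - 1) * t ^ 2 ≤ 0 := by
  have ha0 : (0:ℝ) < a := by linarith
  have hb0 : (0:ℝ) < b := by linarith
  have hs0 : (0:ℝ) < a + b := by linarith
  have hσv : σ * ((a + b) * v) = 1 := by rw [hσ]; exact inv_mul_cancel₀ (by positivity)
  have hσ2 : σ ^ 2 * (a + b) ^ 3 = a * b := by
    have h3 : ((a + b) * v) ^ 2 * (a * b) = (a + b) ^ 3 := by linear_combination (a + b) ^ 2 * hv2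
    calc σ ^ 2 * (a + b) ^ 3 = (σ * ((a + b) * v)) ^ 2 * (a * b) := by rw [← h3]; ring
    _ = a * b := by rw [hσv]; ring
  have hl : a - (a + b) * σ ≤ (a + b) * t := by
    have := mul_le_mul_of_nonneg_left hlo hs0.le
    calc a - (a+b)*σ = (a+b) * (a/(a+b) - σ) := by field_simp
    _ ≤ (a + b) * t := this
  have hr : (a + b) * t ≤ a + (a + b) * σ := by
    have := mul_le_mul_of_nonneg_left hhi hs0.le
    calc (a+b)*t ≤ (a+b) * (a/(a+b) + σ) := this
    _ = a + (a+b)*σ := by field_simp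
  have h1 : ((a + b) * t - a) ^ 2 ≤ ((a + b) * σ) ^ 2 := by
    apply sq_le_sq'
    · linarith
    · linarith
  have key : (a + b) * (a * (a - 1) * (1 - t) ^ 2 - 2 * a * b * t * (1 - t) + b * (b - 1) * t ^ 2)
      = (a + b - 1) * ((a + b) * t - a) ^ 2 - a * b := by ring
  nlinarith [key, mul_le_mul_of_nonneg_left h1 (show (0:ℝ) ≤ a + b - 1 by linarith), hσ2,
    mul_pos ha0 hb0, mul_pos hs0 hs0, hs0]

private lemma second_nonpos {a b t : ℝ} (ht : 0 < t) (ht1 : t < 1)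
    (hQ : a * (a - 1) * (1 - t) ^ 2 - 2 * a * b * t * (1 - t) + b * (b - 1) * t ^ 2 ≤ 0) :
    a * (a - 1) * t ^ (a - 2) * (1 - t) ^ b - 2 * a * b * t ^ (a - 1) * (1 - t) ^ (b - 1)
      + b * (b - 1) * t ^ a * (1 - t) ^ (b - 2) ≤ 0 := by
  have h1t : (0:ℝ) < 1 - t := by linarith
  have e1 : t ^ (a - 1) = t ^ (a - 2) * t := by
    rw [show a - 1 = a - 2 + 1 by ring, Real.rpow_add ht, Real.rpow_one]
  have e2 : t ^ a = t ^ (a - 2) * t * t := by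
    conv_lhs => rw [show a = a - 2 + 1 + 1 by ring]
    rw [Real.rpow_add ht, Real.rpow_add ht, Real.rpow_one]
  have f1 : (1 - t) ^ (b - 1) = (1 - t) ^ (b - 2) * (1 - t) := by
    rw [show b - 1 = b - 2 + 1 by ring, Real.rpow_add h1t, Real.rpow_one]
  have f2 : (1 - t) ^ b = (1 - t) ^ (b - 2) * (1 - t) * (1 - t) := by
    conv_lhs => rw [show b = b - 2 + 1 + 1 by ring]
    rw [Real.rpow_add h1t, Real.rpow_add h1t, Real.rpow_one]
  have hX : (0:ℝ) < t ^ (a - 2) := Real.rpow_pos_of_pos ht _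
  have hY : (0:ℝ) < (1 - t) ^ (b - 2) := Real.rpow_pos_of_pos h1t _
  rw [e1, e2, f1, f2]
  have : a * (a - 1) * t ^ (a - 2) * ((1 - t) ^ (b - 2) * (1 - t) * (1 - t))
      - 2 * a * b * (t ^ (a - 2) * t) * ((1 - t) ^ (b - 2) * (1 - t))
      + b * (b - 1) * (t ^ (a - 2) * t * t) * (1 - t) ^ (b - 2)
      = (t ^ (a - 2) * (1 - t) ^ (b - 2)) *
        (a * (a - 1) * (1 - t) ^ 2 - 2 * a * b * t * (1 - t) + b * (b - 1) * t ^ 2) := by ring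
  rw [this]
  exact mul_nonpos_of_nonneg_of_nonpos (mul_pos hX hY).le hQ

/-- Linear lower bounds for `f t = t ^ a * (1 - t) ^ b` around its maximum, where
`u = a^a b^b / (a+b)^(a+b)` and `v = √((a+b)/(ab))`. -/
theorem stmt1 (a b : ℝ) (ha : 1 ≤ a) (hb : 1 ≤ b)
    (f : ℝ → ℝ) (hf : ∀ t, f t = t ^ a * (1 - t) ^ b)
    (u v : ℝ) (hu : u = a ^ a * b ^ b / (a + b) ^ (a + b))
    (hv : v = Real.sqrt ((a + b) / (a * b))) :
    (∀ t, 0 < t → t < a / (a + b) → u * ((a + b) * v * t - a * v + 1) ≤ f t) ∧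
    (∀ t, a / (a + b) < t → t < 1 → u * (-((a + b) * v * t) + a * v + 1) ≤ f t) := by
  have ha0 : (0:ℝ) < a := by linarith
  have hb0 : (0:ℝ) < b := by linarith
  have hs0 : (0:ℝ) < a + b := by linarith
  have hv0 : 0 < v := by rw [hv]; exact Real.sqrt_pos.mpr (by positivity)
  have hvsq : v ^ 2 = (a + b) / (a * b) := by
    rw [hv, Real.sq_sqrt (by positivity)]
  have hv2 : v ^ 2 * (a * b) = a + b := by rw [hvsq]; field_simp
  set σ : ℝ := ((a + b) * v)⁻¹ with hσ
  have hσ0 : 0 < σ := by rw [hσ]; positivity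
  have hσv : σ * ((a + b) * v) = 1 := by rw [hσ]; exact inv_mul_cancel₀ (by positivity)
  have hσ2 : σ ^ 2 * (a + b) ^ 3 = a * b := by
    have h3 : ((a + b) * v) ^ 2 * (a * b) = (a + b) ^ 3 := by linear_combination (a + b) ^ 2 * hv2
    calc σ ^ 2 * (a + b) ^ 3 = (σ * ((a + b) * v)) ^ 2 * (a * b) := by rw [← h3]; ring
    _ = a * b := by rw [hσv]; ring
  -- the interval of concavity
  set lo : ℝ := a / (a + b) - σ with hlodef
  set hi : ℝ := a / (a + b) + σ with hhidef
  have hσa : σ * (a + b) < a := by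
    have h1 : (σ * (a + b)) ^ 2 < a ^ 2 := by nlinarith [hσ2, mul_pos ha0 hb0]
    exact lt_of_pow_lt_pow_left₀ 2 ha0.le h1
  have hσb : σ * (a + b) < b := by
    have h1 : (σ * (a + b)) ^ 2 < b ^ 2 := by nlinarith [hσ2, mul_pos ha0 hb0]
    exact lt_of_pow_lt_pow_left₀ 2 hb0.le h1
  have hlo0 : 0 < lo := by
    rw [hlodef]
    have : σ < a / (a + b) := by rw [lt_div_iff₀ hs0]; linarith
    linarith
  have hhi1 : hi < 1 := by
    rw [hhidef]
    have h1 : a / (a + b) + σ < a / (a + b) + b / (a + b) := by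
      have : σ < b / (a + b) := by rw [lt_div_iff₀ hs0]; linarith
      linarith
    have h2 : a / (a + b) + b / (a + b) = 1 := by field_simp
    linarith
  have hμlo : lo < a / (a + b) := by rw [hlodef]; linarith
  have hμhi : a / (a + b) < hi := by rw [hhidef]; linarith
  have hu0 : 0 < u := by
    rw [hu]
    positivity
  -- value at the maximum point
  have hFμ : (a / (a + b)) ^ a * (1 - a / (a + b)) ^ b = u := by
    have h1mu : 1 - a / (a + b) = b / (a + b) := by field_simp; ring
    rw [h1mu, Real.div_rpow ha0.le hs0.le, Real.div_rpow hb0.le hs0.le, hu,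
      div_mul_div_comm, ← Real.rpow_add hs0]
  have hFpos : ∀ t : ℝ, 0 < t → t < 1 → 0 < t ^ a * (1 - t) ^ b := fun t ht ht1 =>
    mul_pos (Real.rpow_pos_of_pos ht a) (Real.rpow_pos_of_pos (by linarith) b)
  -- concavity on [lo, hi]
  have hconc : ConcaveOn ℝ (Icc lo hi) (fun t : ℝ => t ^ a * (1 - t) ^ b) := by
    apply concaveOn_of_hasDerivWithinAt2_nonpos (f' := fun t : ℝ =>
        a * t ^ (a - 1) * (1 - t) ^ b - b * t ^ a * (1 - t) ^ (b - 1))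
      (f'' := fun t : ℝ =>
        a * (a - 1) * t ^ (a - 2) * (1 - t) ^ b - 2 * a * b * t ^ (a - 1) * (1 - t) ^ (b - 1)
          + b * (b - 1) * t ^ a * (1 - t) ^ (b - 2))
      (convex_Icc lo hi)
    · intro x _
      exact ((Real.continuousAt_rpow_const x a (Or.inr ha0.le)).mul
        ((Real.continuousAt_rpow_const (1 - x) b (Or.inr hb0.le)).comp
          (continuousAt_const.sub continuousAt_id))).continuousWithinAt
    · rw [interior_Icc]
      intro x hx
      have hx0 : 0 < x := lt_trans hlo0 hx.1
      have hx1 : x < 1 := lt_trans hx.2 hhi1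
      exact (deriv1 ha hb hx0 hx1).hasDerivWithinAt
    · rw [interior_Icc]
      intro x hx
      have hx0 : 0 < x := lt_trans hlo0 hx.1
      have hx1 : x < 1 := lt_trans hx.2 hhi1
      exact (deriv2 ha hb hx0 hx1).hasDerivWithinAt
    · rw [interior_Icc]
      intro x hx
      have hx0 : 0 < x := lt_trans hlo0 hx.1
      have hx1 : x < 1 := lt_trans hx.2 hhi1
      exact second_nonpos hx0 hx1
        (quad_nonpos ha hb hv0 hv2 hσ (by rw [hlodef] at hx; exact hx.1.le)
          (by rw [hhidef] at hx; exact hx.2.le))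
  have hmemμ : a / (a + b) ∈ Icc lo hi := ⟨hμlo.le, hμhi.le⟩
  have hmemlo : lo ∈ Icc lo hi := left_mem_Icc.mpr (by rw [hlodef, hhidef]; linarith)
  have hmemhi : hi ∈ Icc lo hi := right_mem_Icc.mpr (by rw [hlodef, hhidef]; linarith)
  constructor
  · -- left branch
    intro t ht0 htμ
    rw [hf t]
    by_cases hcase : t ≤ lo
    · -- trivial region : the linear bound is nonpositive
      have hloval : (a + b) * v * lo = a * v - 1 := by
        rw [hlodef]
        have : (a + b) * v * (a / (a + b)) = a * v := by field_simp
        calc (a + b) * v * (a / (a + b) - σ) = (a + b) * v * (a / (a + b)) - σ * ((a+b)*v) := by ring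
        _ = a * v - 1 := by rw [this, hσv]
      have hmono : (a + b) * v * t ≤ (a + b) * v * lo :=
        mul_le_mul_of_nonneg_left hcase (by positivity)
      have hL : (a + b) * v * t - a * v + 1 ≤ 0 := by rw [hloval] at hmono; linarith
      have : u * ((a + b) * v * t - a * v + 1) ≤ 0 := mul_nonpos_of_nonneg_of_nonpos hu0.le hL
      have ht1 : t < 1 := by
        have : a / (a + b) < 1 := by rw [div_lt_one hs0]; linarith
        linarith
      exact le_trans this (hFpos t ht0 ht1).le
    · push_neg at hcase
      set lam : ℝ := (a / (a + b) - t) / σ with hlam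
      set eta : ℝ := (t - lo) / σ with heta
      have hlam0 : 0 ≤ lam := div_nonneg (by linarith) hσ0.le
      have heta0 : 0 ≤ eta := div_nonneg (by linarith) hσ0.le
      have hsum : lam + eta = 1 := by
        rw [hlam, heta, hlodef, ← add_div]
        field_simp
        ring
      have hcomb := hconc.2 hmemlo hmemμ hlam0 heta0 hsum
      simp only [smul_eq_mul] at hcomb
      have harg : lam * lo + eta * (a / (a + b)) = t := by
        rw [hlam, heta, hlodef]
        field_simp
        ring
      rw [harg, hFμ] at hcomb
      have hLeq : u * ((a + b) * v * t - a * v + 1) = eta * u := by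
        have he : eta = (a + b) * v * t - a * v + 1 := by
          rw [heta, hlodef, hσ]
          field_simp
          ring
        rw [he]; ring
      have hFlo : 0 ≤ lo ^ a * (1 - lo) ^ b :=
        (hFpos lo hlo0 (lt_trans hμlo (lt_trans hμhi hhi1))).le
      have : eta * u ≤ lam * (lo ^ a * (1 - lo) ^ b) + eta * u :=
        le_add_of_nonneg_left (mul_nonneg hlam0 hFlo)
      rw [hLeq]
      exact le_trans this hcomb
  · -- right branch
    intro t htμ ht1
    rw [hf t]
    by_cases hcase : hi ≤ t
    · have hhival : (a + b) * v * hi = a * v + 1 := by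
        rw [hhidef]
        have : (a + b) * v * (a / (a + b)) = a * v := by field_simp
        calc (a + b) * v * (a / (a + b) + σ) = (a + b) * v * (a / (a + b)) + σ * ((a+b)*v) := by ring
        _ = a * v + 1 := by rw [this, hσv]
      have hmono : (a + b) * v * hi ≤ (a + b) * v * t :=
        mul_le_mul_of_nonneg_left hcase (by positivity)
      have hL : -((a + b) * v * t) + a * v + 1 ≤ 0 := by rw [hhival] at hmono; linarith
      have : u * (-((a + b) * v * t) + a * v + 1) ≤ 0 := mul_nonpos_of_nonneg_of_nonpos hu0.le hL
      have ht0 : 0 < t := by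
        have : 0 < a / (a + b) := by positivity
        linarith
      exact le_trans this (hFpos t ht0 ht1).le
    · push_neg at hcase
      set lam : ℝ := (hi - t) / σ with hlam
      set eta : ℝ := (t - a / (a + b)) / σ with heta
      have hlam0 : 0 ≤ lam := div_nonneg (by linarith) hσ0.le
      have heta0 : 0 ≤ eta := div_nonneg (by linarith) hσ0.le
      have hsum : lam + eta = 1 := by
        rw [hlam, heta, hhidef, ← add_div]
        field_simp
        ring
      have hcomb := hconc.2 hmemμ hmemhi hlam0 heta0 hsum
      simp only [smul_eq_mul] at hcomb
      have harg : lam * (a / (a + b)) + eta * hi = t := by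
        rw [hlam, heta, hhidef]
        field_simp
        ring
      rw [harg, hFμ] at hcomb
      have hLeq : u * (-((a + b) * v * t) + a * v + 1) = lam * u := by
        have he : lam = -((a + b) * v * t) + a * v + 1 := by
          rw [hlam, hhidef, hσ]
          field_simp
          ring
        rw [he]; ring
      have hFhi : 0 ≤ hi ^ a * (1 - hi) ^ b :=
        (hFpos hi (lt_trans hlo0 (lt_trans hμlo hμhi)) hhi1).le
      have : lam * u ≤ lam * u + eta * (hi ^ a * (1 - hi) ^ b) :=
        le_add_of_nonneg_right (mul_nonneg heta0 hFhi)
      rw [hLeq]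
      exact le_trans this hcomb
end

section
/- For a, b ≥ 1 and any λ ∈ [0,1], if |t − a/(a+b)| < (1−λ)√(ab)/(a+b)^(3/2) and t ∈ (0,1), then t^a (1-t)^b > λ · a^a b^b/(a+b)^(a+b). -/
lemma concave_aux (a b l r : ℝ) (ha : 1 ≤ a) (hb : 1 ≤ b) (hl : 0 < l) (hr : r < 1)
    (hP : ∀ x ∈ Set.Ioo l r,
      (a+b)*((a+b)-1)*(x - a/(a+b))^2 ≤ a*b/(a+b)) :
    ConcaveOn ℝ (Set.Icc l r) (fun x : ℝ => x ^ a * (1-x) ^ b) := by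
  have hab : (0:ℝ) < a + b := by linarith
  apply concaveOn_of_hasDerivWithinAt2_nonpos (convex_Icc l r)
    (f' := fun x => a * x^(a-1) * (1-x)^b - b * x^a * (1-x)^(b-1))
    (f'' := fun x => x^(a-2) * (1-x)^(b-2) *
      ((a+b)*((a+b)-1)*(x - a/(a+b))^2 - a*b/(a+b)))
  · -- continuity
    intro x hx
    have hx0 : 0 < x := lt_of_lt_of_le hl hx.1
    have hx1 : (1:ℝ) - x ≥ 0 := by have := hx.2; linarith
    apply ContinuousAt.continuousWithinAt
    exact (Real.continuousAt_rpow_const x a (Or.inl hx0.ne')).mul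
      ((Real.continuousAt_rpow_const (1-x) b (Or.inr (by linarith))).comp
        (continuousAt_const.sub continuousAt_id))
  · -- first derivative
    rw [interior_Icc]
    intro x hx
    have hx0 : 0 < x := lt_trans hl hx.1
    have hx1 : 0 < 1 - x := by have := hx.2; linarith
    have h1 : HasDerivAt (fun y : ℝ => y ^ a) (a * x^(a-1)) x :=
      Real.hasDerivAt_rpow_const (Or.inl hx0.ne')
    have hsub : HasDerivAt (fun y : ℝ => 1 - y) (-1) x := (hasDerivAt_id x).const_sub 1
    have h2 : HasDerivAt (fun y : ℝ => (1-y) ^ b) (b * (1-x)^(b-1) * (-1)) x :=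
      (Real.hasDerivAt_rpow_const (Or.inl hx1.ne')).comp x hsub
    have h3 := h1.mul h2
    have : a * x^(a-1) * (1-x)^b - b * x^a * (1-x)^(b-1)
        = a * x^(a-1) * (1-x)^b + x^a * (b * (1-x)^(b-1) * (-1)) := by ring
    rw [this]
    exact h3.hasDerivWithinAt
  · -- second derivative
    rw [interior_Icc]
    intro x hx
    have hx0 : 0 < x := lt_trans hl hx.1
    have hx1 : 0 < 1 - x := by have := hx.2; linarith
    have h1 : HasDerivAt (fun y : ℝ => y ^ a) (a * x^(a-1)) x :=
      Real.hasDerivAt_rpow_const (Or.inl hx0.ne')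
    have hsub : HasDerivAt (fun y : ℝ => 1 - y) (-1) x := (hasDerivAt_id x).const_sub 1
    have h2 : HasDerivAt (fun y : ℝ => (1-y) ^ b) (b * (1-x)^(b-1) * (-1)) x :=
      (Real.hasDerivAt_rpow_const (Or.inl hx1.ne')).comp x hsub
    have hA1 : HasDerivAt (fun y : ℝ => y ^ (a-1)) ((a-1) * x^(a-1-1)) x :=
      Real.hasDerivAt_rpow_const (Or.inl hx0.ne')
    have hB2 : HasDerivAt (fun y : ℝ => (1-y) ^ (b-1)) ((b-1) * (1-x)^(b-1-1) * (-1)) x :=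
      (Real.hasDerivAt_rpow_const (Or.inl hx1.ne')).comp x hsub
    have hA : HasDerivAt (fun y : ℝ => a * y^(a-1) * (1-y)^b)
        ((a * ((a-1) * x^(a-1-1))) * (1-x)^b + (a * x^(a-1)) * (b * (1-x)^(b-1) * (-1))) x := by
      exact ((hA1.const_mul a).mul h2)
    have hB : HasDerivAt (fun y : ℝ => b * y^a * (1-y)^(b-1))
        ((b * (a * x^(a-1))) * (1-x)^(b-1) + (b * x^a) * ((b-1) * (1-x)^(b-1-1) * (-1))) x := by
      exact ((h1.const_mul b).mul hB2)
    have h3 := hA.sub hB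
    have e1 : x^(a-2)*x = x^(a-1) := by
      have h := (Real.rpow_add hx0 (a-2) 1).symm
      rw [Real.rpow_one] at h
      rw [h, show a-2+1 = a-1 by ring]
    have e2 : x^(a-2)*x*x = x^a := by
      rw [e1]
      have h := (Real.rpow_add hx0 (a-1) 1).symm
      rw [Real.rpow_one] at h
      rw [h, show a-1+1 = a by ring]
    have e3 : (1-x)^(b-2)*(1-x) = (1-x)^(b-1) := by
      have h := (Real.rpow_add hx1 (b-2) 1).symm
      rw [Real.rpow_one] at h
      rw [h, show b-2+1 = b-1 by ring]
    have e4 : (1-x)^(b-2)*(1-x)*(1-x) = (1-x)^b := by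
      rw [e3]
      have h := (Real.rpow_add hx1 (b-1) 1).symm
      rw [Real.rpow_one] at h
      rw [h, show b-1+1 = b by ring]
    have key : x^(a-2) * (1-x)^(b-2) * ((a+b)*((a+b)-1)*(x - a/(a+b))^2 - a*b/(a+b))
        = ((a * ((a-1) * x^(a-1-1))) * (1-x)^b + (a * x^(a-1)) * (b * (1-x)^(b-1) * (-1)))
          - ((b * (a * x^(a-1))) * (1-x)^(b-1) + (b * x^a) * ((b-1) * (1-x)^(b-1-1) * (-1))) := by
      rw [show a-1-1 = a-2 by ring, show b-1-1 = b-2 by ring, ← e2, ← e4, ← e1, ← e3]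
      field_simp
      ring
    rw [key]
    exact h3.hasDerivWithinAt
  · -- nonpositivity
    rw [interior_Icc]
    intro x hx
    have hx0 : 0 < x := lt_trans hl hx.1
    have hx1 : 0 < 1 - x := by have := hx.2; linarith
    have hX : 0 ≤ x^(a-2) := Real.rpow_nonneg hx0.le _
    have hY : 0 ≤ (1-x)^(b-2) := Real.rpow_nonneg hx1.le _
    have := hP x hx
    have hne : (a+b)*((a+b)-1)*(x - a/(a+b))^2 - a*b/(a+b) ≤ 0 := by linarith
    exact mul_nonpos_of_nonneg_of_nonpos (mul_nonneg hX hY) hne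

set_option maxHeartbeats 1000000 in
/-- For `a, b ≥ 1` and `λ ∈ [0,1]`: if `t ∈ (0,1)` and
`|t - a/(a+b)| < (1-λ)√(ab)/(a+b)^(3/2)`, then
`t^a (1-t)^b > λ · a^a b^b/(a+b)^(a+b)`. -/
theorem stmt2 (a b lam t : ℝ) (ha : 1 ≤ a) (hb : 1 ≤ b)
    (hlam : lam ∈ Set.Icc (0:ℝ) 1) (ht : t ∈ Set.Ioo (0:ℝ) 1)
    (h : |t - a / (a + b)| < (1 - lam) * Real.sqrt (a * b) / (a + b) ^ ((3:ℝ)/2)) :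
    lam * (a ^ a * b ^ b / (a + b) ^ (a + b)) < t ^ a * (1 - t) ^ b := by
  have ha0 : (0:ℝ) < a := by linarith
  have hb0 : (0:ℝ) < b := by linarith
  have hab : (0:ℝ) < a + b := by linarith
  set t0 : ℝ := a / (a + b) with ht0
  set δ : ℝ := Real.sqrt (a * b) / (a + b) ^ ((3:ℝ)/2) with hδdef
  have hsab : (0:ℝ) < Real.sqrt (a + b) := Real.sqrt_pos.2 hab
  have h32 : (a + b) ^ ((3:ℝ)/2) = (a + b) * Real.sqrt (a + b) := by
    rw [show (3:ℝ)/2 = 1 + 1/2 by norm_num, Real.rpow_add hab, Real.rpow_one,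
      ← Real.sqrt_eq_rpow]
  have h32pos : (0:ℝ) < (a + b) ^ ((3:ℝ)/2) := Real.rpow_pos_of_pos hab _
  have hδpos : 0 < δ := div_pos (Real.sqrt_pos.2 (by positivity)) h32pos
  -- δ ≤ t0 and δ ≤ 1 - t0
  have hsqb : Real.sqrt (a * b) < a * Real.sqrt (a + b) := by
    rw [show a * Real.sqrt (a+b) = Real.sqrt (a^2 * (a+b)) by
      rw [Real.sqrt_mul (sq_nonneg a), Real.sqrt_sq ha0.le]]
    apply Real.sqrt_lt_sqrt (by positivity)
    nlinarith [mul_nonneg (mul_nonneg ha0.le hb0.le) (by linarith : (0:ℝ) ≤ a - 1),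
      pow_pos ha0 3]
  have hsqa : Real.sqrt (a * b) < b * Real.sqrt (a + b) := by
    rw [show b * Real.sqrt (a+b) = Real.sqrt (b^2 * (a+b)) by
      rw [Real.sqrt_mul (sq_nonneg b), Real.sqrt_sq hb0.le]]
    apply Real.sqrt_lt_sqrt (by positivity)
    nlinarith [mul_nonneg (mul_nonneg ha0.le hb0.le) (by linarith : (0:ℝ) ≤ b - 1),
      pow_pos hb0 3]
  have hδt0 : δ < t0 := by
    rw [hδdef, ht0, div_lt_div_iff₀ h32pos hab, h32]
    calc Real.sqrt (a*b) * (a+b) < a * Real.sqrt (a+b) * (a+b) := by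
          exact mul_lt_mul_of_pos_right hsqb hab
      _ = a * ((a+b) * Real.sqrt (a+b)) := by ring
  have hδt1 : δ < 1 - t0 := by
    have : (1:ℝ) - t0 = b / (a + b) := by rw [ht0]; field_simp; ring
    rw [this, hδdef, div_lt_div_iff₀ h32pos hab, h32]
    calc Real.sqrt (a*b) * (a+b) < b * Real.sqrt (a+b) * (a+b) := by
          exact mul_lt_mul_of_pos_right hsqa hab
      _ = b * ((a+b) * Real.sqrt (a+b)) := by ring
  have hδsq : δ^2 = a * b / (a+b)^3 := by
    rw [hδdef, div_pow, Real.sq_sqrt (by positivity), ← Real.rpow_natCast ((a+b) ^ ((3:ℝ)/2)) 2,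
      ← Real.rpow_mul hab.le]
    norm_num
  -- value at t0
  have hM : t0 ^ a * (1 - t0) ^ b = a ^ a * b ^ b / (a + b) ^ (a + b) := by
    have h1t0 : (1:ℝ) - t0 = b / (a + b) := by rw [ht0]; field_simp; ring
    rw [h1t0, ht0, Real.div_rpow ha0.le hab.le, Real.div_rpow hb0.le hab.le,
      div_mul_div_comm, ← Real.rpow_add hab]
  have hMpos : 0 < a ^ a * b ^ b / (a + b) ^ (a + b) := by
    have := Real.rpow_pos_of_pos ha0 a
    have := Real.rpow_pos_of_pos hb0 b
    have := Real.rpow_pos_of_pos hab (a+b)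
    positivity
  -- concavity on [t0 - δ, t0 + δ]
  have hconc : ConcaveOn ℝ (Set.Icc (t0 - δ) (t0 + δ)) (fun x : ℝ => x ^ a * (1-x) ^ b) := by
    apply concave_aux a b _ _ ha hb
    · linarith
    · linarith
    · intro x hx
      have h1 : (x - t0)^2 ≤ δ^2 := by
        have h2 := hx.1; have h3 := hx.2
        nlinarith [sq_nonneg (x - t0)]
      rw [hδsq] at h1
      have hc2 : (2:ℝ) ≤ a + b := by linarith
      have e1 : (a+b)*((a+b)-1)*(a*b/(a+b)^3) ≤ a*b/(a+b) := by
        rw [show (a+b)*((a+b)-1)*(a*b/(a+b)^3) = ((a+b)*((a+b)-1)*(a*b))/(a+b)^3 by ring,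
          div_le_div_iff₀ (by positivity) hab]
        nlinarith [mul_pos (mul_pos ha0 hb0) (mul_pos hab hab)]
      calc (a+b)*((a+b)-1)*(x - t0)^2 ≤ (a+b)*((a+b)-1)*(a*b/(a+b)^3) := by
            apply mul_le_mul_of_nonneg_left h1 (by nlinarith)
        _ ≤ a*b/(a+b) := e1
  -- convex combination
  have hs : |t - t0| < (1 - lam) * δ := by
    rw [hδdef, ht0]
    calc |t - a/(a+b)| < (1-lam) * Real.sqrt (a*b) / (a+b)^((3:ℝ)/2) := h
      _ = (1-lam) * (Real.sqrt (a*b) / (a+b)^((3:ℝ)/2)) := by ring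
  have hlam1 : lam ≤ 1 := hlam.2
  have hlam0 : 0 ≤ lam := hlam.1
  set θ : ℝ := |t - t0| / δ with hθdef
  have hθ0 : 0 ≤ θ := div_nonneg (abs_nonneg _) hδpos.le
  have hθlt : θ < 1 - lam := (div_lt_iff₀ hδpos).2 (by linarith [hs])
  have hθ1 : θ ≤ 1 := by linarith
  have ht0mem : t0 ∈ Set.Icc (t0 - δ) (t0 + δ) := by
    constructor <;> [linarith; linarith]
  -- the endpoint used
  obtain ⟨t1, ht1mem, ht1nn, h1t1nn, hcomb⟩ :
      ∃ t1, t1 ∈ Set.Icc (t0 - δ) (t0 + δ) ∧ 0 ≤ t1 ∧ t1 ≤ 1 ∧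
        (1 - θ) * t0 + θ * t1 = t := by
    rcases le_or_gt t0 t with hle | hlt
    · refine ⟨t0 + δ, ?_, by linarith, by linarith, ?_⟩
      · constructor <;> linarith
      · have : |t - t0| = t - t0 := abs_of_nonneg (by linarith)
        rw [hθdef, this]; field_simp; ring
    · refine ⟨t0 - δ, ?_, by linarith, by linarith, ?_⟩
      · constructor <;> linarith
      · have : |t - t0| = -(t - t0) := abs_of_neg (by linarith)
        rw [hθdef, this]; field_simp; ring
  have hf1 : 0 ≤ t1 ^ a * (1 - t1) ^ b :=
    mul_nonneg (Real.rpow_nonneg ht1nn _) (Real.rpow_nonneg (by linarith) _)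
  have hkey := hconc.2 ht0mem ht1mem (by linarith : (0:ℝ) ≤ 1 - θ) hθ0 (by ring)
  simp only [smul_eq_mul] at hkey
  rw [hcomb] at hkey
  calc lam * (a ^ a * b ^ b / (a + b) ^ (a + b))
      < (1 - θ) * (a ^ a * b ^ b / (a + b) ^ (a + b)) := by
        apply mul_lt_mul_of_pos_right (by linarith) hMpos
    _ = (1 - θ) * (t0 ^ a * (1 - t0) ^ b) := by rw [hM]
    _ ≤ (1 - θ) * (t0 ^ a * (1 - t0) ^ b) + θ * (t1 ^ a * (1 - t1) ^ b) := by nlinarith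
    _ ≤ t ^ a * (1 - t) ^ b := hkey
end

section
/- For any positive integer k and any real a with 0 < a ≤ 1, the sum over l from 0 to ⌊1/a⌋ of (−1)^l C(k,l) (1−la)^{k−1} is a probability, i.e., it lies in the interval [0,1]. (It equals the probability that k arcs of length a placed independently and uniformly at random on a circle of circumference 1 cover the circle.) -/
open intervalIntegral MeasureTheory Finset

/-- Truncated power: `x^n` for `x > 0`, else `0`. -/
noncomputable def pp (n : ℕ) (x : ℝ) : ℝ := if 0 < x then x ^ n else 0

lemma pp_nonneg (n : ℕ) (x : ℝ) : 0 ≤ pp n x := by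
  unfold pp; split_ifs with h
  · positivity
  · exact le_refl 0

lemma pp_mono (n : ℕ) : Monotone (pp n) := by
  intro x y h
  unfold pp
  split_ifs with hx hy hy
  · exact pow_le_pow_left₀ hx.le h n
  · exact absurd (hx.trans_le h) hy
  · positivity
  · exact le_refl 0

lemma pp_eq_pow {n : ℕ} {x : ℝ} (hn : 1 ≤ n) (hx : 0 ≤ x) : pp n x = x ^ n := by
  unfold pp
  rcases hx.lt_or_eq with h | h
  · rw [if_pos h]
  · rw [← h, if_neg (lt_irrefl 0), zero_pow (by omega)]

lemma pp_integrable (n : ℕ) (c x : ℝ) : IntervalIntegrable (pp n) volume c x :=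
  (pp_mono n).intervalIntegrable

lemma pp_integral (n : ℕ) {c x : ℝ} (h : c ≤ x) :
    ∫ t in c..x, pp n t = (pp (n+1) x - pp (n+1) c) / (n+1) := by
  have key : ∀ {c x : ℝ}, c ≤ x → (0 ≤ c ∨ x ≤ 0) →
      ∫ t in c..x, pp n t = (pp (n+1) x - pp (n+1) c) / (n+1) := by
    rintro c x hcx (hc | hx)
    · have h1 : ∫ t in c..x, pp n t = ∫ t in c..x, t ^ n := by
        apply intervalIntegral.integral_congr_ae
        filter_upwards with t ht
        have : 0 < t := lt_of_le_of_lt hc (by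
          rw [Set.uIoc_of_le hcx] at ht; exact ht.1)
        simp [pp, this]
      rw [h1, integral_pow, pp_eq_pow (by omega) (hc.trans hcx), pp_eq_pow (by omega) hc]
    · have h1 : ∫ t in c..x, pp n t = ∫ t in c..x, (0:ℝ) := by
        apply intervalIntegral.integral_congr_ae
        filter_upwards with t ht
        have ht' : t ≤ 0 := by
          rw [Set.uIoc_of_le hcx] at ht; exact ht.2.trans hx
        simp [pp, not_lt.mpr ht']
      have h2 : pp (n+1) x = 0 := by simp [pp, not_lt.mpr hx]
      have h3 : pp (n+1) c = 0 := by simp [pp, not_lt.mpr (hcx.trans hx)]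
      simp [h1, h2, h3]
  rcases le_or_gt 0 c with hc | hc
  · exact key h (Or.inl hc)
  rcases le_or_gt x 0 with hx | hx
  · exact key h (Or.inr hx)
  rw [← integral_add_adjacent_intervals (pp_integrable n c 0) (pp_integrable n 0 x),
    key hc.le (Or.inr le_rfl), key hx.le (Or.inl le_rfl)]
  ring

/-- The alternating full sum `S n a x = Σ_{l=0}^{n+1} (-1)^l C(n+1,l) pp n (x - l a)`. -/
noncomputable def S (n : ℕ) (a : ℝ) (x : ℝ) : ℝ :=
  ∑ l ∈ Finset.range (n+2), (-1:ℝ)^l * ((n+1).choose l : ℝ) * pp n (x - l * a)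

lemma S_integrable (n : ℕ) (a c x : ℝ) : IntervalIntegrable (S n a) volume c x := by
  have h : ∀ l ∈ Finset.range (n+2), IntervalIntegrable
      (fun t => (-1:ℝ)^l * ((n+1).choose l : ℝ) * pp n (t - l * a)) volume c x := by
    intro l _
    have hm : Monotone (fun t : ℝ => pp n (t - l * a)) :=
      fun u v huv => pp_mono n (by linarith)
    exact hm.intervalIntegrable.const_mul _
  have h2 := IntervalIntegrable.sum (Finset.range (n+2)) h
  have hS : S n a = (∑ i ∈ Finset.range (n+2),
      fun t => (-1:ℝ)^i * ((n+1).choose i : ℝ) * pp n (t - i * a)) := by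
    funext t; rw [Finset.sum_apply]; rfl
  rw [hS]; exact h2

lemma alt_diff (k : ℕ) (f : ℕ → ℝ) :
    ∑ l ∈ Finset.range (k+2), (-1:ℝ)^l * ((k+1).choose l : ℝ) * f l
    = ∑ l ∈ Finset.range (k+1), (-1:ℝ)^l * (k.choose l : ℝ) * (f l - f (l+1)) := by
  have e1 : ∑ l ∈ Finset.range (k+2), (-1:ℝ)^l * ((k+1).choose l : ℝ) * f l
      = (∑ l ∈ Finset.range (k+1), (-1:ℝ)^(l+1) * ((k+1).choose (l+1) : ℝ) * f (l+1)) + f 0 := by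
    rw [Finset.sum_range_succ' (fun l => (-1:ℝ)^l * ((k+1).choose l : ℝ) * f l) (k+1)]
    simp
  have e2 : ∑ l ∈ Finset.range (k+1), (-1:ℝ)^(l+1) * ((k+1).choose (l+1) : ℝ) * f (l+1)
      = ∑ l ∈ Finset.range (k+1), (-((-1:ℝ)^l * (k.choose l : ℝ) * f (l+1))
          + (-1:ℝ)^(l+1) * (k.choose (l+1) : ℝ) * f (l+1)) := by
    apply Finset.sum_congr rfl
    intro l _
    rw [Nat.choose_succ_succ]
    push_cast
    ring
  have e3 : (∑ l ∈ Finset.range (k+1), (-1:ℝ)^(l+1) * (k.choose (l+1) : ℝ) * f (l+1)) + f 0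
      = ∑ l ∈ Finset.range (k+1), (-1:ℝ)^l * (k.choose l : ℝ) * f l := by
    have h1 := Finset.sum_range_succ' (fun l => (-1:ℝ)^l * (k.choose l : ℝ) * f l) (k+1)
    have h2 : ∑ l ∈ Finset.range (k+2), (-1:ℝ)^l * (k.choose l : ℝ) * f l
        = ∑ l ∈ Finset.range (k+1), (-1:ℝ)^l * (k.choose l : ℝ) * f l := by
      rw [Finset.sum_range_succ]
      simp [Nat.choose_eq_zero_of_lt]
    rw [h2] at h1
    simp at h1 ⊢
    linarith
  rw [e1, e2, Finset.sum_add_distrib]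
  rw [show ∀ A B C : ℝ, A + B + C = A + (B + C) from fun A B C => add_assoc A B C]
  rw [e3, ← Finset.sum_add_distrib]
  apply Finset.sum_congr rfl
  intro l _
  ring

lemma S_succ (n : ℕ) {a : ℝ} (ha : 0 ≤ a) (x : ℝ) :
    S (n+1) a x = (n+1) * ∫ t in (x-a)..x, S n a t := by
  have hint : ∀ l ∈ Finset.range (n+2), IntervalIntegrable
      (fun t => (-1:ℝ)^l * ((n+1).choose l : ℝ) * pp n (t - l * a)) volume (x-a) x := by
    intro l _
    have hm : Monotone (fun t : ℝ => pp n (t - l * a)) :=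
      fun u v huv => pp_mono n (by linarith)
    exact hm.intervalIntegrable.const_mul _
  have h0 : (∫ t in (x-a)..x, S n a t) = ∑ l ∈ Finset.range (n+2),
      ∫ t in (x-a)..x, (-1:ℝ)^l * ((n+1).choose l : ℝ) * pp n (t - l * a) :=
    intervalIntegral.integral_finset_sum hint
  rw [h0, Finset.mul_sum]
  have step : ∀ l ∈ Finset.range (n+2),
      ((n:ℝ)+1) * ∫ t in (x-a)..x, (-1:ℝ)^l * ((n+1).choose l : ℝ) * pp n (t - l * a)
      = (-1:ℝ)^l * ((n+1).choose l : ℝ) *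
        (pp (n+1) (x - l*a) - pp (n+1) (x - (l+1)*a)) := by
    intro l _
    rw [intervalIntegral.integral_const_mul, intervalIntegral.integral_comp_sub_right _ (l*a)]
    have h1 : x - a - l*a ≤ x - l*a := by linarith
    rw [pp_integral n h1]
    have h2 : x - a - (l:ℝ)*a = x - ((l:ℝ)+1)*a := by ring
    rw [h2]
    have hne : ((n:ℝ)+1) ≠ 0 := by positivity
    field_simp
  push_cast
  rw [Finset.sum_congr rfl step]
  show S (n+1) a x = _
  unfold S
  have := alt_diff (n+1) (fun l => pp (n+1) (x - l * a))
  rw [this]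
  apply Finset.sum_congr rfl
  intro l _
  push_cast
  ring_nf

lemma S_bounds (n : ℕ) {a : ℝ} (ha : 0 ≤ a) (x : ℝ) :
    0 ≤ S n a x ∧ S n a x ≤ pp n x := by
  induction n generalizing x with
  | zero =>
    have hS : S 0 a x = pp 0 x - pp 0 (x - a) := by
      unfold S
      rw [Finset.sum_range_succ, Finset.sum_range_succ, Finset.sum_range_zero]
      norm_num
      ring
    constructor
    · rw [hS]
      have := pp_mono 0 (show x - a ≤ x by linarith)
      linarith
    · rw [hS]
      have := pp_nonneg 0 (x - a)
      linarith
  | succ n ih =>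
    have hx : x - a ≤ x := by linarith
    rw [S_succ n ha x]
    constructor
    · have h : 0 ≤ ∫ t in (x-a)..x, S n a t :=
        intervalIntegral.integral_nonneg hx (fun u _ => (ih u).1)
      positivity
    · have hmono : (∫ t in (x-a)..x, S n a t) ≤ ∫ t in (x-a)..x, pp n t :=
        intervalIntegral.integral_mono_on hx (S_integrable n a _ _) (pp_integrable n _ _)
          (fun u _ => (ih u).2)
      have hint := pp_integral n hx
      have hne : ((n:ℝ)+1) ≠ 0 := by positivity
      have h2 : ((n:ℝ)+1) * ∫ t in (x-a)..x, pp n t = pp (n+1) x - pp (n+1) (x-a) := by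
        rw [hint]; field_simp
      have h3 := pp_nonneg (n+1) (x - a)
      have hpos : (0:ℝ) ≤ (n:ℝ)+1 := by positivity
      nlinarith [mul_le_mul_of_nonneg_left hmono hpos]

/-- For a positive integer `k` and `a ∈ (0,1]`, the quantity
`Σ_{l=0}^{⌊1/a⌋} (-1)^l C(k,l) (1-la)^(k-1)` lies in `[0,1]`
(it is the probability that `k` random arcs of length `a` cover the circle). -/
theorem stmt6 (k : ℕ) (hk : 1 ≤ k) (a : ℝ) (ha : 0 < a) (ha1 : a ≤ 1) :
    (∑ l ∈ Finset.range (⌊1 / a⌋₊ + 1),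
        (-1 : ℝ) ^ l * (k.choose l : ℝ) * (1 - l * a) ^ (k - 1)) ∈ Set.Icc (0:ℝ) 1 := by
  set m := ⌊1 / a⌋₊ with hm
  have hm1 : 1 ≤ m := by
    apply Nat.le_floor
    rw [Nat.cast_one, le_div_iff₀ ha]
    linarith
  obtain ⟨n, rfl⟩ : ∃ n, k = n + 1 := ⟨k - 1, (Nat.succ_pred_eq_of_pos hk).symm⟩
  have hexp : n + 1 - 1 = n := by omega
  rcases Nat.eq_zero_or_pos n with hn | hn
  · -- k = 1 case: the sum is 0
    subst hn
    have h0 : (∑ l ∈ Finset.range (m+1),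
        (-1 : ℝ) ^ l * ((0+1).choose l : ℝ) * (1 - l * a) ^ (0+1-1)) = 0 := by
      rw [← Finset.sum_subset
        (Finset.range_subset_range.mpr (by omega) : Finset.range 2 ⊆ Finset.range (m+1))]
      · norm_num [Finset.sum_range_succ]
      · intro l _ hl2
        have h2 : 2 ≤ l := by simp at hl2; omega
        simp [Nat.choose_eq_zero_of_lt (by omega : 0 + 1 < l)]
    rw [h0]
    norm_num
  · -- k ≥ 2 case
    set M := max (m+1) (n+2) with hM
    set g : ℕ → ℝ := fun l => (-1:ℝ)^l * ((n+1).choose l : ℝ) * pp n (1 - l*a) with hg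
    have e1 : (∑ l ∈ Finset.range (m+1),
        (-1 : ℝ) ^ l * ((n+1).choose l : ℝ) * (1 - l * a) ^ (n+1-1))
        = ∑ l ∈ Finset.range (m+1), g l := by
      apply Finset.sum_congr rfl
      intro l hl
      have hlm : l ≤ m := by simpa [Nat.lt_succ_iff] using hl
      have hcast : (l:ℝ) ≤ 1/a := le_trans (Nat.cast_le.mpr hlm) (Nat.floor_le (by positivity))
      have hla : (l:ℝ) * a ≤ 1 := by
        rw [← le_div_iff₀ ha]; exact hcast
      rw [hexp, hg]
      dsimp only
      rw [pp_eq_pow hn (by linarith)]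
    have e2 : (∑ l ∈ Finset.range (m+1), g l) = ∑ l ∈ Finset.range M, g l := by
      apply Finset.sum_subset (Finset.range_subset_range.mpr (le_max_left _ _))
      intro l _ hno
      have h1 : m + 1 ≤ l := by simpa using hno
      have h2 : 1/a < ((m:ℝ) + 1) := Nat.lt_floor_add_one (1/a)
      have h3 : 1/a < (l:ℝ) := lt_of_lt_of_le h2 (by exact_mod_cast h1)
      have h4 : (1:ℝ) < l * a := by
        rw [← div_lt_iff₀ ha]; exact h3
      have h5 : ¬ (0 < 1 - (l:ℝ)*a) := by linarith
      have hpp0 : pp n (1 - (l:ℝ)*a) = 0 := if_neg h5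
      simp [hg, hpp0]
    have e3 : S n a 1 = ∑ l ∈ Finset.range M, g l := by
      unfold S
      apply Finset.sum_subset (Finset.range_subset_range.mpr (le_max_right _ _))
      intro l _ hno
      have h1 : n + 2 ≤ l := by simpa using hno
      simp [hg, Nat.choose_eq_zero_of_lt (by omega : n + 1 < l)]
    have hb := S_bounds n ha.le 1
    have hpp1 : pp n 1 = 1 := by simp [pp]
    rw [e1, e2, ← e3]
    exact ⟨hb.1, le_trans hb.2 (le_of_eq hpp1)⟩
end

section
/- If k arcs of fixed length a ∈ (0,1) are placed on the circle of circumference 1, with their left endpoints sampled independently and uniformly, then the probability that the arcs cover the entire circle equals Σ_{l=0}^{⌊1/a⌋} (−1)^l C(k,l) (1−la)^{k−1}. -/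
open MeasureTheory Set

namespace StevensProof



lemma coe_eq_coe {x y : ℝ} : (x : AddCircle (1:ℝ)) = (y:AddCircle (1:ℝ)) ↔ ∃ n : ℤ, x - y = n := by
  rw [show ((x : AddCircle (1:ℝ)) = (y:AddCircle (1:ℝ))) ↔ _ from QuotientAddGroup.eq_iff_sub_mem]
  rw [AddSubgroup.mem_zmultiples_iff]
  constructor
  · rintro ⟨k, hk⟩; exact ⟨k, by simpa using hk.symm⟩
  · rintro ⟨n, hn⟩; exact ⟨n, by simpa using hn.symm⟩

/-- membership in the half-open arc `(u, u+a]` on the circle -/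
def Arc (a : ℝ) (u v : AddCircle (1:ℝ)) : Prop := ∃ t ∈ Set.Ioc (0:ℝ) a, v = u + (t:AddCircle (1:ℝ))

lemma arc_iff_fract {a : ℝ} (ha1 : a < 1) (u v : ℝ) :
    Arc a (u:AddCircle (1:ℝ)) (v:AddCircle (1:ℝ)) ↔ Int.fract (v - u) ∈ Set.Ioc 0 a := by
  unfold Arc
  constructor
  · rintro ⟨t, ht, h⟩
    rw [show ((u:AddCircle (1:ℝ)) + (t:AddCircle (1:ℝ))) = ((u + t : ℝ) : AddCircle (1:ℝ)) by norm_cast] at h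
    obtain ⟨n, hn⟩ := coe_eq_coe.1 h
    have hfr : Int.fract (v - u) = Int.fract t := by
      rw [Int.fract_eq_fract]
      exact ⟨n, by linarith⟩
    rw [hfr, Int.fract_eq_self.2 ⟨le_of_lt ht.1, lt_of_le_of_lt ht.2 ha1⟩]
    exact ht
  · intro h
    refine ⟨Int.fract (v - u), h, ?_⟩
    rw [show ((u:AddCircle (1:ℝ)) + ((Int.fract (v-u) : ℝ):AddCircle (1:ℝ)))
        = ((u + Int.fract (v - u) : ℝ) : AddCircle (1:ℝ)) by norm_cast]
    rw [coe_eq_coe]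
    exact ⟨⌊v - u⌋, by rw [Int.fract]; ring⟩

lemma covered_iff_fract {a : ℝ} (ha0 : 0 ≤ a) (ha1 : a < 1) (u v : ℝ) :
    (∃ t ∈ Set.Icc (0:ℝ) a, (v : AddCircle (1:ℝ)) = (u:AddCircle (1:ℝ)) + (t:AddCircle (1:ℝ)))
      ↔ Int.fract (v - u) ≤ a := by
  constructor
  · rintro ⟨t, ht, h⟩
    rw [show ((u:AddCircle (1:ℝ)) + (t:AddCircle (1:ℝ))) = ((u + t : ℝ) : AddCircle (1:ℝ)) by norm_cast] at h
    obtain ⟨n, hn⟩ := coe_eq_coe.1 h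
    have hfr : Int.fract (v - u) = Int.fract t := by
      rw [Int.fract_eq_fract]
      exact ⟨n, by linarith⟩
    rw [hfr, Int.fract_eq_self.2 ⟨ht.1, lt_of_le_of_lt ht.2 ha1⟩]
    exact ht.2
  · intro h
    refine ⟨Int.fract (v - u), ⟨Int.fract_nonneg _, h⟩, ?_⟩
    rw [show ((u:AddCircle (1:ℝ)) + ((Int.fract (v-u) : ℝ):AddCircle (1:ℝ)))
        = ((u + Int.fract (v - u) : ℝ) : AddCircle (1:ℝ)) by norm_cast]
    rw [coe_eq_coe]
    exact ⟨⌊v - u⌋, by rw [Int.fract]; ring⟩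

lemma not_arc_self {a : ℝ} (ha1 : a < 1) (u : AddCircle (1:ℝ)) : ¬ Arc a u u := by
  obtain ⟨r, hr⟩ : ∃ r : ℝ, (r : AddCircle (1:ℝ)) = u := Quotient.exists_rep u
  rw [← hr, arc_iff_fract ha1]
  simp

/-- translation invariance of Arc -/
lemma arc_sub {a : ℝ} (u v c : AddCircle (1:ℝ)) : Arc a (u - c) (v - c) ↔ Arc a u v := by
  unfold Arc
  constructor
  · rintro ⟨t, ht, h⟩; exact ⟨t, ht, by rw [sub_eq_iff_eq_add] at h; rw [h]; abel⟩
  · rintro ⟨t, ht, h⟩; exact ⟨t, ht, by rw [h]; abel⟩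

/-- The coverage event as a combinatorial condition. -/
lemma cover_iff {a : ℝ} (ha0 : 0 < a) (ha1 : a < 1) {k : ℕ} (hk : 1 ≤ k)
    (x : Fin k → AddCircle (1:ℝ)) :
    (∀ y : AddCircle (1:ℝ), ∃ i : Fin k, ∃ t ∈ Set.Icc (0:ℝ) a, y = x i + (t:AddCircle (1:ℝ)))
      ↔ ∀ i : Fin k, ∃ j : Fin k, Arc a (x i) (x j) := by
  have hrep : ∀ i, ∃ r : ℝ, (r : AddCircle (1:ℝ)) = x i := fun i => Quotient.exists_rep (x i)
  choose xr hxr using hrep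
  constructor
  · -- covered → combinatorial
    intro hcov i
    by_contra hno
    push_neg at hno
    -- all fract (xr j - xr i) are in {0} ∪ (a,1)
    have hm : ∀ j, Int.fract (xr j - xr i) = 0 ∨ a < Int.fract (xr j - xr i) := by
      intro j
      have := hno j
      rw [← hxr i, ← hxr j, arc_iff_fract ha1] at this
      rcases eq_or_lt_of_le (Int.fract_nonneg (xr j - xr i)) with h0 | hpos
      · exact Or.inl h0.symm
      · right
        by_contra hle
        push_neg at hle
        exact this ⟨hpos, hle⟩
    -- pick ε
    classical
    set F : Finset ℝ := insert (1 - a)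
      ((Finset.univ.filter (fun j => a < Int.fract (xr j - xr i))).image
        (fun j => Int.fract (xr j - xr i) - a)) with hF
    have hFne : F.Nonempty := ⟨1 - a, Finset.mem_insert_self _ _⟩
    obtain ⟨ε2, hε2F, hε2min⟩ := Finset.exists_min_image F id hFne
    have hε2pos : 0 < ε2 := by
      rw [hF] at hε2F
      rcases Finset.mem_insert.1 hε2F with h | h
      · rw [h]; linarith
      · obtain ⟨j, hj, hje⟩ := Finset.mem_image.1 h
        rw [← hje]
        have := (Finset.mem_filter.1 hj).2
        linarith
    set ε := ε2 / 2 with hε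
    have hεpos : 0 < ε := by positivity
    have hεa : ε < 1 - a := by
      have := hε2min (1-a) (Finset.mem_insert_self _ _)
      simp only [id] at this
      rw [hε]; linarith
    -- the point xr i + a + ε is uncovered
    obtain ⟨j, t, ht, hcovj⟩ := hcov ((xr i + a + ε : ℝ) : AddCircle (1:ℝ))
    rw [← hxr j] at hcovj
    have hfr : Int.fract ((xr i + a + ε) - xr j) ≤ a :=
      (covered_iff_fract (le_of_lt ha0) ha1 _ _).1 ⟨t, ht, hcovj⟩
    -- compute : fract (a + ε - (xr j - xr i))
    have hcong : Int.fract ((xr i + a + ε) - xr j) = Int.fract ((a + ε) - Int.fract (xr j - xr i)) := by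
      rw [Int.fract_eq_fract]
      refine ⟨-⌊xr j - xr i⌋, ?_⟩
      have hfl : Int.fract (xr j - xr i) + ⌊xr j - xr i⌋ = xr j - xr i := Int.fract_add_floor _
      push_cast
      linarith
    rcases hm j with h0 | hbig
    · rw [hcong, h0, sub_zero, Int.fract_eq_self.2 ⟨by linarith, by linarith⟩] at hfr
      linarith
    · have hjmem : (Int.fract (xr j - xr i) - a) ∈ F := by
        rw [hF]
        exact Finset.mem_insert_of_mem (Finset.mem_image.2
          ⟨j, Finset.mem_filter.2 ⟨Finset.mem_univ _, hbig⟩, rfl⟩)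
      have hεj : ε < Int.fract (xr j - xr i) - a := by
        have := hε2min _ hjmem
        simp only [id] at this
        rw [hε]; linarith
      have hlt1 : Int.fract (xr j - xr i) < 1 := Int.fract_lt_one _
      -- a + ε - m ∈ (-1, 0), so fract = a + ε - m + 1
      have : Int.fract ((a + ε) - Int.fract (xr j - xr i))
          = (a + ε) - Int.fract (xr j - xr i) + 1 := by
        have h := Int.fract_add_intCast ((a + ε) - Int.fract (xr j - xr i)) 1
        push_cast at h
        rw [← h, Int.fract_eq_self.2 ⟨by linarith, by linarith⟩]
      rw [hcong, this] at hfr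
      linarith
  · -- combinatorial → covered
    intro harc y
    obtain ⟨ry, hry⟩ : ∃ r : ℝ, (r : AddCircle (1:ℝ)) = y := Quotient.exists_rep y
    by_contra hnc
    push_neg at hnc
    have hd : ∀ j, a < Int.fract (ry - xr j) := by
      intro j
      by_contra hle
      push_neg at hle
      obtain ⟨t, ht, hteq⟩ := (covered_iff_fract (le_of_lt ha0) ha1 (xr j) ry).2 hle
      exact (hnc j t ht) (by rw [← hry, hteq, hxr j])
    classical
    obtain ⟨i, _, hmin⟩ := Finset.exists_min_image Finset.univ
      (fun j => Int.fract (ry - xr j)) ⟨⟨0, hk⟩, Finset.mem_univ _⟩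
    obtain ⟨j, hj⟩ := harc i
    rw [← hxr i, ← hxr j, arc_iff_fract ha1] at hj
    set δ := Int.fract (xr j - xr i) with hδ
    have hdi : a < Int.fract (ry - xr i) := hd i
    have h1 : Int.fract (ry - xr i) - δ ∈ Set.Ico (0:ℝ) 1 := by
      constructor
      · linarith [hj.2]
      · linarith [Int.fract_lt_one (ry - xr i), hj.1]
    have hdj : Int.fract (ry - xr j) = Int.fract (ry - xr i) - δ := by
      have h2 : Int.fract (ry - xr j) = Int.fract (Int.fract (ry - xr i) - δ) := by
        rw [Int.fract_eq_fract]
        refine ⟨⌊ry - xr i⌋ - ⌊xr j - xr i⌋, ?_⟩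
        have hf1 : Int.fract (ry - xr i) + ⌊ry - xr i⌋ = ry - xr i := Int.fract_add_floor _
        have hf2 : δ + ⌊xr j - xr i⌋ = xr j - xr i := Int.fract_add_floor _
        push_cast
        linarith
      rw [h2, Int.fract_eq_self.2 ⟨h1.1, h1.2⟩]
    have := hmin j (Finset.mem_univ j)
    rw [hdj] at this
    linarith [hj.1]



lemma incl_excl {α ι : Type*} [MeasurableSpace α] [DecidableEq ι] (ν : Measure α)
    [IsFiniteMeasure ν] (B : ι → Set α) (hB : ∀ i, MeasurableSet (B i)) (s : Finset ι)
    (C : Set α) (hC : MeasurableSet C) :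
    (ν (C ∩ ⋂ i ∈ s, (B i)ᶜ)).toReal
      = ∑ S ∈ s.powerset, (-1:ℝ)^S.card * (ν (C ∩ ⋂ i ∈ S, B i)).toReal := by
  induction s using Finset.induction generalizing C with
  | empty => simp
  | insert j s hj ih =>
    have hR : MeasurableSet (⋂ i ∈ s, (B i)ᶜ) :=
      MeasurableSet.biInter (Finset.countable_toSet s) (fun i _ => (hB i).compl)
    have hsplit : (ν ((C ∩ ⋂ i ∈ s, (B i)ᶜ) ∩ B j)).toReal
        + (ν ((C ∩ ⋂ i ∈ s, (B i)ᶜ) \ B j)).toReal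
        = (ν (C ∩ ⋂ i ∈ s, (B i)ᶜ)).toReal := by
      rw [← ENNReal.toReal_add (measure_ne_top _ _) (measure_ne_top _ _),
        measure_inter_add_diff _ (hB j)]
    have h1 : C ∩ ⋂ i ∈ insert j s, (B i)ᶜ = (C ∩ ⋂ i ∈ s, (B i)ᶜ) \ B j := by
      rw [Finset.set_biInter_insert]
      ext z; simp only [Set.mem_inter_iff, Set.mem_diff, Set.mem_compl_iff]; tauto
    have h2 : (C ∩ ⋂ i ∈ s, (B i)ᶜ) ∩ B j = (C ∩ B j) ∩ ⋂ i ∈ s, (B i)ᶜ := by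
      ext z; simp only [Set.mem_inter_iff]; tauto
    rw [h1, eq_sub_of_add_eq' hsplit, h2, ih C hC, ih (C ∩ B j) (hC.inter (hB j)),
      Finset.sum_powerset_insert hj]
    have h3 : ∀ S ∈ s.powerset,
        (-1:ℝ)^(insert j S).card * (ν (C ∩ ⋂ i ∈ insert j S, B i)).toReal
        = -((-1:ℝ)^S.card * (ν ((C ∩ B j) ∩ ⋂ i ∈ S, B i)).toReal) := by
      intro S hS
      have hjS : j ∉ S := fun h => hj (Finset.mem_powerset.1 hS h)
      rw [Finset.card_insert_of_notMem hjS, Finset.set_biInter_insert, pow_succ]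
      have : C ∩ (B j ∩ ⋂ i ∈ S, B i) = (C ∩ B j) ∩ ⋂ i ∈ S, B i := by
        ext z; simp only [Set.mem_inter_iff]; tauto
      rw [this]; ring
    rw [Finset.sum_congr rfl h3, Finset.sum_neg_distrib]
    ring


lemma pi_null_hyper {ι : Type*} [Fintype ι] (ρ : ι → Measure ℝ) [∀ i, SigmaFinite (ρ i)]
    (i : ι) (c : ℝ) (h0 : ρ i {c} = 0) : Measure.pi ρ {v | v i = c} = 0 := by
  classical
  have hsub : {v : ι → ℝ | v i = c} ⊆ Set.univ.pi (fun j => if j = i then {c} else Set.univ) := by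
    intro v hv
    refine Set.mem_univ_pi.2 (fun j => ?_)
    by_cases h : j = i
    · subst h; simpa using hv
    · simp [h]
  refine measure_mono_null hsub ?_
  rw [Measure.pi_pi]
  exact Finset.prod_eq_zero (Finset.mem_univ i) (by simp [h0])

lemma pi_null_diag {ι : Type*} [Fintype ι] [DecidableEq ι] (ρ : Measure ℝ) [SigmaFinite ρ]
    (hρ : ∀ c : ℝ, ρ {c} = 0) {i j : ι} (hij : i ≠ j) :
    Measure.pi (fun _ : ι => ρ) {v | v i = v j} = 0 := by
  classical
  set e := MeasurableEquiv.piEquivPiSubtypeProd (fun _ : ι => ℝ) (fun x => x = i)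
  have hmp := measurePreserving_piEquivPiSubtypeProd (fun _ : ι => ρ) (fun x => x = i)
  have hset : {v : ι → ℝ | v i = v j}
      = e ⁻¹' {q : ({x // x = i} → ℝ) × ({x // ¬ x = i} → ℝ) |
          q.1 ⟨i, rfl⟩ = q.2 ⟨j, fun h => hij h.symm⟩} := by
    ext v
    simp only [Set.mem_setOf_eq, Set.mem_preimage]
    rfl
  have hmeas : MeasurableSet {q : ({x // x = i} → ℝ) × ({x // ¬ x = i} → ℝ) |
      q.1 ⟨i, rfl⟩ = q.2 ⟨j, fun h => hij h.symm⟩} := by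
    apply measurableSet_eq_fun
    · exact (measurable_pi_apply _).comp measurable_fst
    · exact (measurable_pi_apply _).comp measurable_snd
  rw [hset, hmp.measure_preimage hmeas.nullMeasurableSet, Measure.prod_apply hmeas]
  have : ∀ u : {x // x = i} → ℝ,
      (Measure.pi fun _ : {x // ¬ x = i} => ρ)
        (Prod.mk u ⁻¹' {q : ({x // x = i} → ℝ) × ({x // ¬ x = i} → ℝ) |
          q.1 ⟨i, rfl⟩ = q.2 ⟨j, fun h => hij h.symm⟩}) = 0 := by
    intro u
    have : (Prod.mk u ⁻¹' {q : ({x // x = i} → ℝ) × ({x // ¬ x = i} → ℝ) |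
        q.1 ⟨i, rfl⟩ = q.2 ⟨j, fun h => hij h.symm⟩})
        = {w : {x // ¬ x = i} → ℝ | w ⟨j, fun h => hij h.symm⟩ = u ⟨i, rfl⟩} := by
      ext w; simp only [Set.mem_preimage, Set.mem_setOf_eq]; exact eq_comm
    rw [this]
    exact pi_null_hyper _ _ _ (hρ _)
  simp only [this]
  simp

lemma pi_null_noninj {ι : Type*} [Fintype ι] [DecidableEq ι] (ρ : Measure ℝ) [SigmaFinite ρ]
    (hρ : ∀ c : ℝ, ρ {c} = 0) :
    Measure.pi (fun _ : ι => ρ) {v | ¬ Function.Injective v} = 0 := by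
  classical
  have hsub : {v : ι → ℝ | ¬ Function.Injective v}
      ⊆ ⋃ p ∈ (Finset.univ.filter (fun p : ι × ι => p.1 ≠ p.2)),
          {v : ι → ℝ | v p.1 = v p.2} := by
    intro v hv
    simp only [Function.Injective, not_forall] at hv
    obtain ⟨x, y, hxy, hne⟩ := hv
    exact Set.mem_iUnion₂.2 ⟨(x, y), Finset.mem_filter.2 ⟨Finset.mem_univ _, hne⟩, hxy⟩
  refine measure_mono_null hsub ?_
  refine (measure_biUnion_null_iff (Finset.countable_toSet _)).2 (fun p hp => ?_)
  exact pi_null_diag ρ hρ (by simpa using (Finset.mem_filter.1 hp).2)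

/-- Decomposition of the measure of a set according to the strict ordering of coordinates. -/
lemma decomp_orderings {ι : Type*} [Fintype ι] [DecidableEq ι] (ρ : Measure ℝ) [SigmaFinite ρ]
    (hρ : ∀ c : ℝ, ρ {c} = 0) (M : ℕ) (hM : Fintype.card ι = M) {W : Set (ι → ℝ)}
    (hW : MeasurableSet W) :
    Measure.pi (fun _ : ι => ρ) W
      = ∑ e : Fin M ≃ ι,
          Measure.pi (fun _ : ι => ρ) (W ∩ {v | StrictMono (v ∘ e)}) := by
  classical
  subst hM
  set μ := Measure.pi (fun _ : ι => ρ)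
  have hPmeas : ∀ e : Fin (Fintype.card ι) ≃ ι, MeasurableSet {v : ι → ℝ | StrictMono (v ∘ e)} := by
    intro e
    have : {v : ι → ℝ | StrictMono (v ∘ e)}
        = ⋂ s : Fin (Fintype.card ι), ⋂ t : Fin (Fintype.card ι), ⋂ _ : s < t,
            {v : ι → ℝ | v (e s) < v (e t)} := by
      ext v
      simp only [Set.mem_setOf_eq, Set.mem_iInter, StrictMono]
      exact ⟨fun h s t hst => h hst, fun h {s t} hst => h s t hst⟩
    rw [this]
    refine MeasurableSet.iInter fun s => MeasurableSet.iInter fun t => MeasurableSet.iInter fun _ => ?_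
    exact measurableSet_lt (measurable_pi_apply _) (measurable_pi_apply _)
  have hUmeas : MeasurableSet (⋃ e ∈ (Finset.univ : Finset (Fin (Fintype.card ι) ≃ ι)),
      {v : ι → ℝ | StrictMono (v ∘ e)}) :=
    MeasurableSet.biUnion (Finset.countable_toSet _) (fun e _ => hPmeas e)
  have hdiff : μ (W \ ⋃ e ∈ (Finset.univ : Finset (Fin (Fintype.card ι) ≃ ι)),
      {v | StrictMono (v ∘ e)}) = 0 := by
    refine measure_mono_null (fun v hv => ?_) (pi_null_noninj ρ hρ)
    simp only [Set.mem_diff, Set.mem_iUnion] at hv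
    obtain ⟨hvW, hvn⟩ := hv
    simp only [Set.mem_setOf_eq]
    intro hinj
    set e0 := (Fintype.equivFin ι).symm
    set σ := Tuple.sort (v ∘ e0)
    refine hvn ⟨σ.trans e0, Finset.mem_univ _, ?_⟩
    have hmono : Monotone ((v ∘ e0) ∘ σ) := Tuple.monotone_sort _
    have hinj2 : Function.Injective ((v ∘ e0) ∘ σ) :=
      hinj.comp (e0.injective.comp σ.injective)
    have := hmono.strictMono_of_injective hinj2
    convert this using 1
    exact Iff.rfl
  have hsplit : μ W = μ (W ∩ ⋃ e ∈ (Finset.univ : Finset (Fin (Fintype.card ι) ≃ ι)),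
      {v | StrictMono (v ∘ e)}) := by
    rw [← measure_inter_add_diff W hUmeas, hdiff, add_zero]
  rw [hsplit, Set.inter_iUnion₂]
  rw [measure_biUnion_finset ?_ (fun e _ => hW.inter (hPmeas e))]
  · intro e _ e' _ hee
    simp only [Function.onFun]
    refine Set.disjoint_left.2 (fun v hv hv' => hee ?_)
    have h1 : StrictMono (v ∘ e) := hv.2
    have h2 : StrictMono (v ∘ e') := hv'.2
    have hinj : Function.Injective v := by
      intro x y hxy
      have := h1.injective (a₁ := e.symm x) (a₂ := e.symm y) (by simpa using hxy)
      simpa using congrArg e this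
    have hr : Set.range (v ∘ e) = Set.range (v ∘ e') := by
      rw [Set.range_comp, Set.range_comp]
      simp [Set.range_eq_univ.2 e.surjective, Set.range_eq_univ.2 e'.surjective]
    haveI : WellFoundedLT (Fin (Fintype.card ι)) := inferInstance
    have := (h1.range_inj h2).1 hr
    ext t
    exact hinj (congrFun this t)


/-- ordered configurations `a < v 0`, `v t + a < v (t+1)`, `v (m-1) < bnd` -/
def chain (m : ℕ) (a bnd : ℝ) : Set (Fin m → ℝ) :=
  {v | (∀ t : Fin m, (t:ℕ) = 0 → a < v t) ∧ (∀ s t : Fin m, (s:ℕ)+1 = (t:ℕ) → v s + a < v t)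
      ∧ (∀ t : Fin m, (t:ℕ)+1 = m → v t < bnd)}

lemma chain_measurable (m : ℕ) (a bnd : ℝ) : MeasurableSet (chain m a bnd) := by
  have hrw : chain m a bnd = (⋂ t : Fin m, ⋂ _ : (t:ℕ) = 0, {v : Fin m → ℝ | a < v t})
      ∩ ((⋂ s : Fin m, ⋂ t : Fin m, ⋂ _ : (s:ℕ)+1 = (t:ℕ), {v : Fin m → ℝ | v s + a < v t})
      ∩ (⋂ t : Fin m, ⋂ _ : (t:ℕ)+1 = m, {v : Fin m → ℝ | v t < bnd})) := by
    ext v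
    simp only [chain, Set.mem_inter_iff, Set.mem_iInter, Set.mem_setOf_eq]
  rw [hrw]
  refine MeasurableSet.inter ?_ (MeasurableSet.inter ?_ ?_)
  · exact MeasurableSet.iInter fun t => MeasurableSet.iInter fun _ =>
      measurableSet_lt measurable_const (measurable_pi_apply _)
  · exact MeasurableSet.iInter fun s => MeasurableSet.iInter fun t => MeasurableSet.iInter fun _ =>
      measurableSet_lt ((measurable_pi_apply _).add_const _) (measurable_pi_apply _)
  · exact MeasurableSet.iInter fun t => MeasurableSet.iInter fun _ =>
      measurableSet_lt (measurable_pi_apply _) measurable_const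

lemma chain_strictMono {m : ℕ} {a bnd : ℝ} (ha : 0 ≤ a) {v : Fin m → ℝ} (hv : v ∈ chain m a bnd) :
    StrictMono v := by
  have hadj : ∀ t : Fin m, ∀ h : (t:ℕ)+1 < m, v t < v ⟨(t:ℕ)+1, h⟩ := by
    intro t h
    have := hv.2.1 t ⟨(t:ℕ)+1, h⟩ rfl
    linarith
  intro s t hst
  rcases t with ⟨tv, htv⟩
  induction tv with
  | zero => exact absurd hst (by simp [Fin.lt_def])
  | succ n ih =>
    have hn : n < m := Nat.lt_of_succ_lt htv
    have hlast : v ⟨n, hn⟩ < v ⟨n+1, htv⟩ := hadj ⟨n, hn⟩ htv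
    rcases Nat.lt_or_ge (s:ℕ) n with h | h
    · exact lt_trans (ih hn (by simp [Fin.lt_def]; omega)) hlast
    · have : (s:ℕ) = n := by
        have := hst
        simp [Fin.lt_def] at this
        omega
      have hs : s = ⟨n, hn⟩ := by ext; simp [this]
      rw [hs]; exact hlast

lemma chain_bounds {m : ℕ} {a bnd : ℝ} (ha : 0 ≤ a) {v : Fin m → ℝ} (hv : v ∈ chain m a bnd)
    (t : Fin m) : a < v t ∧ v t < bnd := by
  have hsm := chain_strictMono ha hv
  have hm : 0 < m := t.pos
  have h0 : a < v ⟨0, hm⟩ := hv.1 _ rfl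
  have hl : v ⟨m-1, by omega⟩ < bnd := hv.2.2 ⟨m-1, by omega⟩ (by show m - 1 + 1 = m; omega)
  constructor
  · rcases eq_or_lt_of_le (show (⟨0, hm⟩ : Fin m) ≤ t by simp [Fin.le_def]) with h | h
    · rw [← h]; exact h0
    · exact lt_trans h0 (hsm h)
  · rcases eq_or_lt_of_le (show t ≤ (⟨m-1, by omega⟩ : Fin m) by
        rw [Fin.le_def]; have := t.isLt; show (t:ℕ) ≤ m - 1; omega) with h | h
    · rw [h]; exact hl
    · exact lt_trans (hsm h) hl

/-- translation: shift by `fun t => (t+1)*a` -/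
lemma chain_translate (m : ℕ) (a bnd : ℝ) :
    (fun v : Fin m → ℝ => v + fun t : Fin m => ((t:ℕ)+1)*a) ⁻¹' (chain m a bnd)
      = chain m 0 (bnd - m*a) := by
  ext v
  simp only [chain, Set.mem_preimage, Set.mem_setOf_eq, Pi.add_apply]
  constructor
  · rintro ⟨h1, h2, h3⟩
    refine ⟨fun t ht => ?_, fun s t hst => ?_, fun t ht => ?_⟩
    · have e1 : ((t:ℕ):ℝ) = 0 := by exact_mod_cast ht
      have := h1 t ht; rw [e1] at this; linarith
    · have e1 : ((s:ℕ):ℝ) + 1 = ((t:ℕ):ℝ) := by exact_mod_cast hst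
      have := h2 s t hst; rw [← e1] at this; linarith
    · have e1 : ((t:ℕ):ℝ) + 1 = (m:ℝ) := by exact_mod_cast ht
      have := h3 t ht; rw [e1] at this; linarith
  · rintro ⟨h1, h2, h3⟩
    refine ⟨fun t ht => ?_, fun s t hst => ?_, fun t ht => ?_⟩
    · have e1 : ((t:ℕ):ℝ) = 0 := by exact_mod_cast ht
      have := h1 t ht; rw [e1]; linarith
    · have e1 : ((s:ℕ):ℝ) + 1 = ((t:ℕ):ℝ) := by exact_mod_cast hst
      have := h2 s t hst; rw [← e1]; linarith
    · have e1 : ((t:ℕ):ℝ) + 1 = (m:ℝ) := by exact_mod_cast ht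
      have := h3 t ht; rw [e1]; linarith

lemma volume_pi_chain_translate (m : ℕ) (a bnd : ℝ) :
    Measure.pi (fun _ : Fin m => (volume : Measure ℝ)) (chain m a bnd)
      = Measure.pi (fun _ : Fin m => (volume : Measure ℝ)) (chain m 0 (bnd - m*a)) := by
  haveI : (Measure.pi (fun _ : Fin m => (volume : Measure ℝ))).IsAddLeftInvariant := by
    rw [← volume_pi]; infer_instance
  rw [← chain_translate m a bnd]
  have := measure_preimage_add (Measure.pi (fun _ : Fin m => (volume : Measure ℝ)))
    (fun t : Fin m => ((t:ℕ)+1)*a) (chain m a bnd)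
  rw [← this]
  congr 1
  ext v
  simp [add_comm]

/-- product of restricted coordinates equals restriction to the box -/
lemma pi_restrict {ι : Type*} [Fintype ι] {s : Set ℝ} (hs : MeasurableSet s) :
    Measure.pi (fun _ : ι => (volume : Measure ℝ).restrict s)
      = (Measure.pi fun _ : ι => (volume : Measure ℝ)).restrict (Set.univ.pi fun _ => s) := by
  refine (Measure.pi_eq fun t ht => ?_)
  rw [Measure.restrict_apply (MeasurableSet.univ_pi ht), ← Set.pi_inter_distrib, Measure.pi_pi]
  exact Finset.prod_congr rfl fun i _ => (Measure.restrict_apply (ht i)).symm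


noncomputable def rho : Measure ℝ := (volume : Measure ℝ).restrict (Set.Ioc 0 1)

instance : IsFiniteMeasure rho := by
  unfold rho
  constructor
  rw [Measure.restrict_apply MeasurableSet.univ]
  simp [Real.volume_Ioc]

instance : SigmaFinite rho := by unfold rho; infer_instance

lemma rho_singleton (c : ℝ) : rho {c} = 0 := by
  unfold rho
  rw [Measure.restrict_apply (measurableSet_singleton c)]
  exact measure_mono_null Set.inter_subset_left (Real.volume_singleton)

lemma rho_Ioc {c : ℝ} (hc : c ≤ 1) : rho (Set.Ioc 0 c) = ENNReal.ofReal c := by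
  unfold rho
  rw [Measure.restrict_apply measurableSet_Ioc, Set.Ioc_inter_Ioc]
  simp only [max_self, min_eq_left hc]
  rw [Real.volume_Ioc, sub_zero]

/-- the admissible configuration set for the chosen arcs (excluding the pinned one) -/
def goodA (a : ℝ) {ι : Type*} : Set (ι → ℝ) :=
  {u | (∀ i, a < u i ∧ u i < 1 - a) ∧ ∀ i i', u i' ∉ Set.Ioc (u i) (u i + a)}

lemma goodA_measurable {a : ℝ} {ι : Type*} [Fintype ι] : MeasurableSet (goodA a (ι := ι)) := by
  have hrw : goodA a (ι := ι) = (⋂ i, ({u : ι → ℝ | a < u i} ∩ {u | u i < 1 - a}))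
      ∩ ⋂ i, ⋂ i', {u : ι → ℝ | u i' ∉ Set.Ioc (u i) (u i + a)} := by
    ext u
    simp only [goodA, Set.mem_inter_iff, Set.mem_iInter, Set.mem_setOf_eq]
  rw [hrw]
  refine MeasurableSet.inter ?_ ?_
  · exact MeasurableSet.iInter fun i => (measurableSet_lt measurable_const (measurable_pi_apply _)).inter
      (measurableSet_lt (measurable_pi_apply _) measurable_const)
  · refine MeasurableSet.iInter fun i => MeasurableSet.iInter fun i' => ?_
    have : {u : ι → ℝ | u i' ∉ Set.Ioc (u i) (u i + a)}
        = ({u : ι → ℝ | u i < u i'} ∩ {u | u i' ≤ u i + a})ᶜ := by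
      ext u; simp [Set.mem_Ioc]
    rw [this]
    refine MeasurableSet.compl ?_
    exact (measurableSet_lt (measurable_pi_apply i) (measurable_pi_apply i')).inter
      (measurableSet_le (measurable_pi_apply i') (by fun_prop))

lemma goodA_inter_P {a : ℝ} (ha : 0 < a) {ι : Type*} {m : ℕ} (e : Fin m ≃ ι) :
    goodA a ∩ {v : ι → ℝ | StrictMono (v ∘ e)} = {v : ι → ℝ | v ∘ e ∈ chain m a (1 - a)} := by
  ext v
  simp only [goodA, Set.mem_inter_iff, Set.mem_setOf_eq]
  constructor
  · rintro ⟨⟨hb, hp⟩, hsm⟩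
    refine ⟨fun t _ => (hb (e t)).1, fun s t hst => ?_, fun t _ => (hb (e t)).2⟩
    have hlt : v (e s) < v (e t) := hsm (by rw [Fin.lt_def]; omega)
    have := hp (e s) (e t)
    rw [Set.mem_Ioc] at this
    push_neg at this
    simp only [Function.comp_apply]
    linarith [this hlt]
  · intro hch
    have hsm : StrictMono (v ∘ e) := chain_strictMono (le_of_lt ha) hch
    refine ⟨⟨fun i => ?_, fun i i' => ?_⟩, hsm⟩
    · have := chain_bounds (le_of_lt ha) hch (e.symm i)
      simpa using this
    · rw [Set.mem_Ioc]
      push_neg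
      intro hlt
      set s := e.symm i
      set t := e.symm i'
      have hi : e s = i := e.apply_symm_apply i
      have hi' : e t = i' := e.apply_symm_apply i'
      have hst : s < t := by
        by_contra hle
        push_neg at hle
        rcases eq_or_lt_of_le hle with h | h
        · rw [← hi, ← hi', h] at hlt; exact lt_irrefl _ hlt
        · have := hsm h
          simp only [Function.comp_apply] at this
          rw [hi, hi'] at this
          linarith
      have hstep : (s:ℕ) + 1 ≤ (t:ℕ) := by rw [Fin.lt_def] at hst; omega
      have hs1 : ((s:ℕ)+1) < m := lt_of_le_of_lt hstep t.isLt
      have hgap : v (e s) + a < v (e ⟨(s:ℕ)+1, by omega⟩) := hch.2.1 s ⟨(s:ℕ)+1, by omega⟩ (by simp)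
      have hmono : v (e ⟨(s:ℕ)+1, by omega⟩) ≤ v (e t) := by
        rcases eq_or_lt_of_le (show (⟨(s:ℕ)+1, by omega⟩ : Fin m) ≤ t by rw [Fin.le_def]; simpa using hstep) with h | h
        · rw [h]
        · exact le_of_lt (hsm h)
      rw [← hi, ← hi']
      linarith

lemma pi_reindex {ι : Type*} [Fintype ι] (ρ : Measure ℝ) [SigmaFinite ρ] {m : ℕ} (e : Fin m ≃ ι)
    {D : Set (Fin m → ℝ)} (hD : MeasurableSet D) :
    Measure.pi (fun _ : ι => ρ) {v : ι → ℝ | v ∘ e ∈ D} = Measure.pi (fun _ : Fin m => ρ) D := by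
  have hmp := measurePreserving_piCongrLeft (fun _ : ι => ρ) e
  have hsymm := hmp.symm (MeasurableEquiv.piCongrLeft (fun _ : ι => ℝ) e)
  have happ : ∀ v : ι → ℝ, (MeasurableEquiv.piCongrLeft (fun _ : ι => ℝ) e).symm v = v ∘ e := by
    intro v
    funext t
    simp [MeasurableEquiv.piCongrLeft, Equiv.piCongrLeft]
  have hset : {v : ι → ℝ | v ∘ e ∈ D}
      = (MeasurableEquiv.piCongrLeft (fun _ : ι => ℝ) e).symm ⁻¹' D := by
    ext v; simp [happ v]
  rw [hset]
  exact hsymm.measure_preimage hD.nullMeasurableSet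

lemma measurable_strictMonoSet {m : ℕ} : MeasurableSet {w : Fin m → ℝ | StrictMono w} := by
  have : {w : Fin m → ℝ | StrictMono w}
      = ⋂ s : Fin m, ⋂ t : Fin m, ⋂ _ : s < t, {w : Fin m → ℝ | w s < w t} := by
    ext w
    simp only [Set.mem_setOf_eq, Set.mem_iInter]
    exact ⟨fun h s t hst => h hst, fun h {s t} hst => h s t hst⟩
  rw [this]
  exact MeasurableSet.iInter fun s => MeasurableSet.iInter fun t => MeasurableSet.iInter fun _ =>
    measurableSet_lt (measurable_pi_apply _) (measurable_pi_apply _)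

lemma rho_pi_chain_eq_vol {M : ℕ} {b bnd : ℝ} (hb : 0 ≤ b) (hbnd : bnd ≤ 1) :
    Measure.pi (fun _ : Fin M => rho) (chain M b bnd)
      = Measure.pi (fun _ : Fin M => (volume : Measure ℝ)) (chain M b bnd) := by
  unfold rho
  rw [pi_restrict measurableSet_Ioc, Measure.restrict_apply (chain_measurable _ _ _)]
  congr 1
  refine Set.inter_eq_left.2 (fun v hv => Set.mem_univ_pi.2 fun j => ?_)
  obtain ⟨h1, h2⟩ := chain_bounds hb hv j
  exact ⟨lt_of_le_of_lt hb h1, le_trans (le_of_lt h2) hbnd⟩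

lemma goodA_measure {ι : Type*} [Fintype ι] [DecidableEq ι] {a : ℝ} (ha : 0 < a) (ha1 : a < 1)
    (M : ℕ) (hM : Fintype.card ι = M) :
    Measure.pi (fun _ : ι => rho) (goodA a)
      = ENNReal.ofReal (1 - (M + 1) * a) ^ M := by
  classical
  set c : ℝ := 1 - (M + 1) * a with hc
  have hc1 : c ≤ 1 := by
    rw [hc]
    nlinarith [Nat.cast_nonneg (α := ℝ) M]
  -- common value : volume of the open simplex
  set X : ENNReal := Measure.pi (fun _ : Fin M => rho) (chain M 0 c) with hX
  -- goodA side
  have h1 := decomp_orderings (ι := ι) rho rho_singleton M hM (goodA_measurable (a := a))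
  have h2 : ∀ e : Fin M ≃ ι,
      Measure.pi (fun _ : ι => rho) (goodA a ∩ {v | StrictMono (v ∘ e)}) = X := by
    intro e
    rw [goodA_inter_P ha e, pi_reindex rho e (chain_measurable _ _ _), hX]
    rw [rho_pi_chain_eq_vol (le_of_lt ha) (by linarith), rho_pi_chain_eq_vol le_rfl hc1]
    rw [volume_pi_chain_translate M a (1 - a)]
    have harith : (1 : ℝ) - a - (M:ℝ)*a = c := by rw [hc]; push_cast; ring
    rw [harith]
  -- cube side
  set cube : Set (Fin M → ℝ) := Set.univ.pi (fun _ => Set.Ioc (0:ℝ) c) with hcube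
  have hcubemeas : MeasurableSet cube := MeasurableSet.univ_pi (fun _ => measurableSet_Ioc)
  set D : Set (Fin M → ℝ) := {w | StrictMono w ∧ ∀ t, w t ∈ Set.Ioc 0 c} with hD
  have hDmeas : MeasurableSet D := by
    have : D = {w : Fin M → ℝ | StrictMono w} ∩ Set.univ.pi (fun _ => Set.Ioc (0:ℝ) c) := by
      ext w
      simp only [hD, Set.mem_setOf_eq, Set.mem_inter_iff, Set.mem_univ_pi]
    rw [this]
    exact measurable_strictMonoSet.inter (MeasurableSet.univ_pi fun _ => measurableSet_Ioc)
  have h3 := decomp_orderings (ι := Fin M) rho rho_singleton M (Fintype.card_fin M) hcubemeas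
  have h4 : ∀ e : Fin M ≃ Fin M,
      Measure.pi (fun _ : Fin M => rho) (cube ∩ {v | StrictMono (v ∘ e)}) = X := by
    intro e
    have hset : cube ∩ {v : Fin M → ℝ | StrictMono (v ∘ e)} = {v : Fin M → ℝ | v ∘ e ∈ D} := by
      ext v
      simp only [hcube, hD, Set.mem_inter_iff, Set.mem_setOf_eq, Set.mem_univ_pi]
      constructor
      · rintro ⟨hbox, hsm⟩
        exact ⟨hsm, fun t => hbox (e t)⟩
      · rintro ⟨hsm, hbox⟩
        exact ⟨fun i => by simpa using hbox (e.symm i), hsm⟩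
    rw [hset, pi_reindex rho e hDmeas, hX]
    -- D and chain M 0 c agree up to a null hyperplane
    rcases Nat.eq_zero_or_pos M with hM0 | hMpos
    · congr 1
      subst hM0
      ext w
      simp only [hD, chain, Set.mem_setOf_eq]
      constructor
      · rintro ⟨h, h'⟩
        exact ⟨fun t _ => absurd t.isLt (by omega), fun s t _ => absurd t.isLt (by omega),
          fun t _ => absurd t.isLt (by omega)⟩
      · rintro h
        exact ⟨fun ⦃x y⦄ hxy => absurd x.isLt (by omega), fun t => absurd t.isLt (by omega)⟩
    · have hchain_sub : chain M 0 c ⊆ D := by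
        intro w hw
        refine ⟨chain_strictMono le_rfl hw, fun t => ?_⟩
        obtain ⟨hl, hr⟩ := chain_bounds le_rfl hw t
        exact ⟨hl, le_of_lt hr⟩
      have hdiff : D \ chain M 0 c ⊆ {w : Fin M → ℝ | w ⟨M-1, by omega⟩ = c} := by
        rintro w ⟨⟨hsm, hbox⟩, hnc⟩
        simp only [Set.mem_setOf_eq]
        by_contra hne
        refine hnc ⟨fun t _ => (hbox t).1, fun s t hst => ?_, fun t ht => ?_⟩
        · have : s < t := by rw [Fin.lt_def]; omega
          simpa using hsm this
        · have hteq : t = ⟨M-1, by omega⟩ := by ext; simp; omega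
          rcases eq_or_lt_of_le (hbox t).2 with h | h
          · exact absurd (by rw [← hteq]; exact h) hne
          · exact h
      have hnull : Measure.pi (fun _ : Fin M => rho) {w : Fin M → ℝ | w ⟨M-1, by omega⟩ = c} = 0 :=
        pi_null_hyper _ _ _ (rho_singleton c)
      refine le_antisymm ?_ (measure_mono hchain_sub)
      calc Measure.pi (fun _ : Fin M => rho) D
          ≤ Measure.pi (fun _ : Fin M => rho) (chain M 0 c ∪ {w : Fin M → ℝ | w ⟨M-1, by omega⟩ = c}) := by
            refine measure_mono (fun w hw => ?_)
            by_cases h : w ∈ chain M 0 c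
            · exact Or.inl h
            · exact Or.inr (hdiff ⟨hw, h⟩)
        _ ≤ _ + _ := measure_union_le _ _
        _ = Measure.pi (fun _ : Fin M => rho) (chain M 0 c) := by rw [hnull, add_zero]
  -- cube measure
  have hcubeval : Measure.pi (fun _ : Fin M => rho) cube = ENNReal.ofReal c ^ M := by
    rw [hcube, Measure.pi_pi]
    rw [Finset.prod_const, rho_Ioc hc1]
    simp
  -- counting
  have e0 : Fin M ≃ ι := (Fintype.equivFinOfCardEq hM).symm
  have hcard1 : Fintype.card (Fin M ≃ ι) = Nat.factorial M := by
    rw [Fintype.card_equiv e0, Fintype.card_fin]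
  have hcard2 : Fintype.card (Fin M ≃ Fin M) = Nat.factorial M := by
    rw [Fintype.card_equiv (Equiv.refl _), Fintype.card_fin]
  rw [h1, Finset.sum_congr rfl (fun e _ => h2 e), Finset.sum_const, Finset.card_univ, hcard1]
  rw [h3, Finset.sum_congr rfl (fun e _ => h4 e), Finset.sum_const, Finset.card_univ, hcard2] at hcubeval
  rw [← hcubeval]

/-- free-coordinate fiber set -/
def Gset (a : ℝ) {ι : Type*} (u : ι → ℝ) : Set ℝ :=
  Set.Ioc a 1 \ ⋃ i, Set.Ioc (u i) (u i + a)

lemma Gset_val {a : ℝ} (ha : 0 < a) (ha1 : a < 1) {ι : Type*} [Fintype ι] {L : ℕ}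
    (hL : Fintype.card ι = L) {u : ι → ℝ} (hu : u ∈ goodA a) (hinj : Function.Injective u) :
    rho (Gset a u) = ENNReal.ofReal (1 - (L + 1) * a) := by
  classical
  have hbounds := hu.1
  have harcsub : ∀ i, Set.Ioc (u i) (u i + a) ⊆ Set.Ioc a 1 := by
    intro i x hx
    exact ⟨lt_trans (hbounds i).1 hx.1, le_trans hx.2 (by linarith [(hbounds i).2])⟩
  have harcval : ∀ i, rho (Set.Ioc (u i) (u i + a)) = ENNReal.ofReal a := by
    intro i
    unfold rho
    rw [Measure.restrict_apply measurableSet_Ioc]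
    have : Set.Ioc (u i) (u i + a) ∩ Set.Ioc 0 1 = Set.Ioc (u i) (u i + a) := by
      refine Set.inter_eq_left.2 (fun x hx => ?_)
      have := harcsub i hx
      exact ⟨lt_trans ha this.1, this.2⟩
    rw [this, Real.volume_Ioc]
    norm_num
  have hdisj : ∀ i ∈ (Finset.univ : Finset ι), ∀ i' ∈ (Finset.univ : Finset ι), i ≠ i' →
      Disjoint (Set.Ioc (u i) (u i + a)) (Set.Ioc (u i') (u i' + a)) := by
    intro i _ i' _ hne
    have hne' : u i ≠ u i' := fun h => hne (hinj h)
    have key : ∀ x y : ι, u x < u y → u y > u x + a := by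
      intro x y hxy
      have := hu.2 x y
      rw [Set.mem_Ioc] at this
      push_neg at this
      linarith [this hxy]
    rcases lt_or_gt_of_ne hne' with h | h
    · rw [Set.disjoint_left]
      rintro x ⟨h1, h2⟩ ⟨h3, h4⟩
      have := key i i' h
      linarith
    · rw [Set.disjoint_left]
      rintro x ⟨h1, h2⟩ ⟨h3, h4⟩
      have := key i' i h
      linarith
  have hUmeas : ∀ i ∈ (Finset.univ : Finset ι), MeasurableSet (Set.Ioc (u i) (u i + a)) :=
    fun i _ => measurableSet_Ioc
  have hUval : rho (⋃ i, Set.Ioc (u i) (u i + a)) = (L : ENNReal) * ENNReal.ofReal a := by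
    rw [← Set.biUnion_univ, ← Finset.coe_univ, Finset.set_biUnion_coe]
    rw [measure_biUnion_finset hdisj hUmeas]
    rw [Finset.sum_congr rfl (fun i _ => harcval i), Finset.sum_const, Finset.card_univ, hL]
    simp [nsmul_eq_mul]
  have hIoc : rho (Set.Ioc a 1) = ENNReal.ofReal (1 - a) := by
    unfold rho
    rw [Measure.restrict_apply measurableSet_Ioc, Set.Ioc_inter_Ioc]
    rw [max_eq_left (le_of_lt ha), min_self, Real.volume_Ioc]
  have hsub : (⋃ i, Set.Ioc (u i) (u i + a)) ⊆ Set.Ioc a 1 := Set.iUnion_subset harcsub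
  have hLa : (L:ℝ) * a ≤ 1 - a := by
    have hmono := measure_mono (μ := rho) hsub
    rw [hUval, hIoc] at hmono
    have : ENNReal.ofReal ((L:ℝ) * a) ≤ ENNReal.ofReal (1 - a) := by
      rwa [ENNReal.ofReal_mul (by positivity), ENNReal.ofReal_natCast]
    rwa [ENNReal.ofReal_le_ofReal_iff (by linarith)] at this
  unfold Gset
  rw [measure_diff hsub (MeasurableSet.iUnion (fun i => measurableSet_Ioc)).nullMeasurableSet
      (by rw [hUval]; exact ENNReal.mul_ne_top (ENNReal.natCast_ne_top L) ENNReal.ofReal_ne_top)]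
  rw [hUval, hIoc]
  rw [show (L : ENNReal) * ENNReal.ofReal a = ENNReal.ofReal ((L:ℝ) * a) by
    rw [ENNReal.ofReal_mul (by positivity), ENNReal.ofReal_natCast]]
  rw [← ENNReal.ofReal_sub _ (by positivity : (0:ℝ) ≤ (L:ℝ) * a)]
  congr 1
  ring

lemma measurable_injSet {ι : Type*} [Fintype ι] [DecidableEq ι] :
    MeasurableSet {u : ι → ℝ | Function.Injective u} := by
  have : {u : ι → ℝ | Function.Injective u}
      = ⋂ i : ι, ⋂ i' : ι, ⋂ _ : i ≠ i', {u : ι → ℝ | u i = u i'}ᶜ := by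
    ext u
    simp only [Set.mem_setOf_eq, Set.mem_iInter, Set.mem_compl_iff, Function.Injective]
    constructor
    · intro h i i' hne hval
      exact hne (h hval)
    · intro h x y hval
      by_contra hne
      exact h x y hne hval
  rw [this]
  exact MeasurableSet.iInter fun i => MeasurableSet.iInter fun i' => MeasurableSet.iInter fun _ =>
    (measurableSet_eq_fun (measurable_pi_apply i) (measurable_pi_apply i')).compl

/-- the pinned event, in real coordinates -/
def Ehat (a : ℝ) {n : ℕ} (p : Fin n → Prop) : Set (Fin n → ℝ) :=
  {y | (∀ j, y j ∈ Set.Ioc a 1) ∧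
    ∀ i, p i → (y i < 1 - a ∧ ∀ j, y j ∉ Set.Ioc (y i) (y i + a))}

lemma Ehat_measure {a : ℝ} (ha : 0 < a) (ha1 : a < 1) {n : ℕ} (p : Fin n → Prop)
    [DecidablePred p] (L : ℕ) (hL : Fintype.card {j // p j} = L) :
    Measure.pi (fun _ : Fin n => rho) (Ehat a p)
      = ENNReal.ofReal (1 - (L + 1) * a) ^ L
        * ENNReal.ofReal (1 - (L + 1) * a) ^ (Fintype.card {j // ¬ p j}) := by
  classical
  set R := Fintype.card {j // ¬ p j} with hR
  set c : ℝ := 1 - ((L:ℝ) + 1) * a with hc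
  have hGmem : ∀ (u : {j // p j} → ℝ) (x : ℝ),
      x ∈ Gset a u ↔ (x ∈ Set.Ioc a 1 ∧ ∀ i, x ∉ Set.Ioc (u i) (u i + a)) := by
    intro u x
    unfold Gset
    simp only [Set.mem_diff, Set.mem_iUnion, not_exists]
  -- the product-space event (with injectivity built in)
  set F : Set (({j // p j} → ℝ) × ({j // ¬ p j} → ℝ)) :=
    {q | q.1 ∈ goodA a ∧ ∀ r, q.2 r ∈ Gset a q.1} with hF
  set F' : Set (({j // p j} → ℝ) × ({j // ¬ p j} → ℝ)) :=
    {q | (q.1 ∈ goodA a ∧ Function.Injective q.1) ∧ ∀ r, q.2 r ∈ Gset a q.1} with hF'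
  have hFmeas0 : MeasurableSet F := by
    have : F = (Prod.fst ⁻¹' goodA a)
        ∩ ⋂ r : {j // ¬ p j}, (({q : ({j // p j} → ℝ) × ({j // ¬ p j} → ℝ) | a < q.2 r}
            ∩ {q | q.2 r ≤ 1})
          ∩ ⋂ i : {j // p j}, ({q : ({j // p j} → ℝ) × ({j // ¬ p j} → ℝ) | q.1 i < q.2 r}
            ∩ {q | q.2 r ≤ q.1 i + a})ᶜ) := by
      ext q
      simp only [hF, Set.mem_setOf_eq, Set.mem_inter_iff, Set.mem_preimage, Set.mem_iInter,
        Set.mem_compl_iff, hGmem, Set.mem_Ioc]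
      try tauto
    rw [this]
    refine (goodA_measurable.preimage measurable_fst).inter ?_
    refine MeasurableSet.iInter fun r => MeasurableSet.inter ?_ ?_
    · exact (measurableSet_lt measurable_const
        ((measurable_pi_apply r).comp' measurable_snd)).inter
        (measurableSet_le ((measurable_pi_apply r).comp' measurable_snd) measurable_const)
    · refine MeasurableSet.iInter fun i => MeasurableSet.compl ?_
      exact (measurableSet_lt ((measurable_pi_apply i).comp' measurable_fst)
          ((measurable_pi_apply r).comp' measurable_snd)).inter
        (measurableSet_le ((measurable_pi_apply r).comp' measurable_snd)
          (by fun_prop))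
  have hFmeas' : MeasurableSet F' := by
    have : F' = F ∩ (Prod.fst ⁻¹' {u : {j // p j} → ℝ | Function.Injective u}) := by
      ext q
      simp only [hF, hF', Set.mem_inter_iff, Set.mem_setOf_eq, Set.mem_preimage]
      tauto
    rw [this]
    exact hFmeas0.inter (measurable_injSet.preimage measurable_fst)
  -- Ehat is the pullback of F
  have hpull : Ehat a p
      = (MeasurableEquiv.piEquivPiSubtypeProd (fun _ : Fin n => ℝ) p) ⁻¹' F := by
    ext y
    simp only [Ehat, hF, Set.mem_preimage, Set.mem_setOf_eq,
      MeasurableEquiv.piEquivPiSubtypeProd, MeasurableEquiv.coe_mk,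
      Equiv.piEquivPiSubtypeProd, Equiv.coe_fn_mk, goodA, hGmem]
    constructor
    · rintro ⟨hbox, hcond⟩
      exact ⟨⟨fun i => ⟨(hbox i).1, (hcond i i.2).1⟩, fun i i' => (hcond i i.2).2 i'⟩,
        fun r => ⟨hbox r, fun i => (hcond i i.2).2 r⟩⟩
    · rintro ⟨⟨hb, hp2⟩, hw⟩
      constructor
      · intro j
        by_cases hpj : p j
        · exact ⟨(hb ⟨j, hpj⟩).1, le_of_lt (lt_of_lt_of_le (hb ⟨j, hpj⟩).2 (by linarith))⟩
        · exact (hw ⟨j, hpj⟩).1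
      · intro i hpi
        refine ⟨(hb ⟨i, hpi⟩).2, fun j => ?_⟩
        by_cases hpj : p j
        · exact hp2 ⟨i, hpi⟩ ⟨j, hpj⟩
        · exact (hw ⟨j, hpj⟩).2 ⟨i, hpi⟩
  have hmp := measurePreserving_piEquivPiSubtypeProd (fun _ : Fin n => rho) p
  rw [hpull, hmp.measure_preimage hFmeas0.nullMeasurableSet]
  -- pass to F'
  have hFF' : (Measure.pi (fun _ : {j // p j} => rho)).prod
      (Measure.pi (fun _ : {j // ¬ p j} => rho)) F
      = (Measure.pi (fun _ : {j // p j} => rho)).prod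
      (Measure.pi (fun _ : {j // ¬ p j} => rho)) F' := by
    refine le_antisymm ?_ (measure_mono (fun q hq => ⟨hq.1.1, hq.2⟩))
    have hsub : F ⊆ F' ∪ ({u : {j // p j} → ℝ | ¬ Function.Injective u} ×ˢ Set.univ) := by
      intro q hq
      by_cases hinj : Function.Injective q.1
      · exact Or.inl ⟨⟨hq.1, hinj⟩, hq.2⟩
      · exact Or.inr ⟨hinj, Set.mem_univ _⟩
    calc _ ≤ _ := measure_mono hsub
      _ ≤ _ + _ := measure_union_le _ _
      _ = _ := by
        rw [Measure.prod_prod, pi_null_noninj rho rho_singleton, zero_mul, add_zero]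
  rw [hFF', Measure.prod_apply hFmeas']
  -- slice computation
  have hslice : ∀ u : {j // p j} → ℝ,
      (Measure.pi (fun _ : {j // ¬ p j} => rho)) (Prod.mk u ⁻¹' F')
        = Set.indicator (goodA a ∩ {u | Function.Injective u})
            (fun _ => ENNReal.ofReal c ^ R) u := by
    intro u
    by_cases hu : u ∈ goodA a ∩ {u : {j // p j} → ℝ | Function.Injective u}
    · rw [Set.indicator_of_mem hu]
      have : Prod.mk u ⁻¹' F' = Set.univ.pi (fun _ : {j // ¬ p j} => Gset a u) := by
        ext w
        simp only [hF', Set.mem_preimage, Set.mem_setOf_eq, Set.mem_univ_pi]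
        exact ⟨fun h => h.2, fun h => ⟨⟨hu.1, hu.2⟩, h⟩⟩
      rw [this, Measure.pi_pi, Finset.prod_const, Finset.card_univ,
        Gset_val ha ha1 hL hu.1 hu.2, ← hR, hc]
    · rw [Set.indicator_of_notMem hu]
      have : Prod.mk u ⁻¹' F' = ∅ := by
        ext w
        simp only [hF', Set.mem_preimage, Set.mem_setOf_eq, Set.mem_empty_iff_false, iff_false]
        rintro ⟨⟨h1, h2⟩, _⟩
        exact hu ⟨h1, h2⟩
      rw [this, measure_empty]
  rw [lintegral_congr hslice]
  rw [lintegral_indicator (goodA_measurable.inter measurable_injSet)]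
  rw [setLIntegral_const]
  have hgood : Measure.pi (fun _ : {j // p j} => rho)
      (goodA a ∩ {u : {j // p j} → ℝ | Function.Injective u})
      = Measure.pi (fun _ : {j // p j} => rho) (goodA a) := by
    refine le_antisymm (measure_mono Set.inter_subset_left) ?_
    have hsub : goodA a ⊆ (goodA a ∩ {u : {j // p j} → ℝ | Function.Injective u})
        ∪ {u : {j // p j} → ℝ | ¬ Function.Injective u} := by
      intro u hu
      by_cases hinj : Function.Injective u
      · exact Or.inl ⟨hu, hinj⟩
      · exact Or.inr hinj
    calc _ ≤ _ := measure_mono hsub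
      _ ≤ _ + _ := measure_union_le _ _
      _ = _ := by rw [pi_null_noninj rho rho_singleton, add_zero]
  rw [hgood, goodA_measure ha ha1 L hL]
  rw [mul_comm]

lemma arc_zero_iff {a : ℝ} (u v : AddCircle (1:ℝ)) : Arc a u v ↔ Arc a 0 (v - u) := by
  rw [← arc_sub u v u, sub_self]

lemma measurable_arcZero {a : ℝ} (ha1 : a < 1) :
    MeasurableSet {z : AddCircle (1:ℝ) | Arc a 0 z} := by
  have key : {z : AddCircle (1:ℝ) | Arc a 0 z}
      = (AddCircle.measurableEquivIoc 1 0) ⁻¹' {w : Set.Ioc (0:ℝ) (0+1) | (w:ℝ) ≤ a} := by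
    ext z
    set r : ℝ := ((AddCircle.equivIoc 1 0 z : Set.Ioc (0:ℝ) (0+1)) : ℝ) with hr
    have hrmem : r ∈ Set.Ioc (0:ℝ) (0+1) := (AddCircle.equivIoc 1 0 z).2
    have hz : ((r : ℝ) : AddCircle (1:ℝ)) = z := (AddCircle.equivIoc 1 0).symm_apply_apply z
    simp only [Set.mem_setOf_eq, Set.mem_preimage]
    have hiff : Arc a 0 z ↔ Int.fract (r - 0) ∈ Set.Ioc 0 a := by
      rw [← hz]
      exact_mod_cast arc_iff_fract ha1 0 r
    rw [hiff]
    rw [zero_add] at hrmem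
    constructor
    · intro h
      rcases eq_or_lt_of_le hrmem.2 with h1 | h1
      · exfalso
        rw [sub_zero, h1] at h
        simp at h
      · rw [sub_zero, Int.fract_eq_self.2 ⟨le_of_lt hrmem.1, h1⟩] at h
        exact h.2
    · intro h
      have h1 : r < 1 := lt_of_le_of_lt h ha1
      rw [sub_zero, Int.fract_eq_self.2 ⟨le_of_lt hrmem.1, h1⟩]
      exact ⟨hrmem.1, h⟩
  rw [key]
  exact (AddCircle.measurableEquivIoc 1 0).measurable
    (measurable_subtype_coe measurableSet_Iic)

def Bset (a : ℝ) {k : ℕ} (i : Fin k) : Set (Fin k → AddCircle (1:ℝ)) :=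
  {x | ∀ j, ¬ Arc a (x i) (x j)}

lemma measurable_Bset {a : ℝ} (ha1 : a < 1) {k : ℕ} (i : Fin k) : MeasurableSet (Bset a i) := by
  have : Bset a i = ⋂ j, ((fun x : Fin k → AddCircle (1:ℝ) => x j - x i) ⁻¹'
      {z : AddCircle (1:ℝ) | Arc a 0 z})ᶜ := by
    ext x
    simp only [Bset, Set.mem_setOf_eq, Set.mem_iInter, Set.mem_compl_iff, Set.mem_preimage]
    exact ⟨fun h j => fun hc => h j ((arc_zero_iff _ _).2 hc),
      fun h j hc => h j ((arc_zero_iff _ _).1 hc)⟩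
  rw [this]
  exact MeasurableSet.iInter fun j =>
    (((measurable_pi_apply j).sub (measurable_pi_apply i)) (measurable_arcZero ha1)).compl

def D0set (a : ℝ) {n : ℕ} (p : Fin n → Prop) : Set (Fin n → AddCircle (1:ℝ)) :=
  {z | (∀ j, ¬ Arc a 0 (z j)) ∧ ∀ i, p i → ((¬ Arc a (z i) 0) ∧ ∀ j, ¬ Arc a (z i) (z j))}

lemma measurable_D0set {a : ℝ} (ha1 : a < 1) {n : ℕ} (p : Fin n → Prop) :
    MeasurableSet (D0set a p) := by
  classical
  have : D0set a p = (⋂ j, ((fun z : Fin n → AddCircle (1:ℝ) => z j) ⁻¹'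
        {w : AddCircle (1:ℝ) | Arc a 0 w})ᶜ)
      ∩ ⋂ i, ⋂ _ : p i, (((fun z : Fin n → AddCircle (1:ℝ) => 0 - z i) ⁻¹'
            {w : AddCircle (1:ℝ) | Arc a 0 w})ᶜ
          ∩ ⋂ j, ((fun z : Fin n → AddCircle (1:ℝ) => z j - z i) ⁻¹'
            {w : AddCircle (1:ℝ) | Arc a 0 w})ᶜ) := by
    ext z
    simp only [D0set, Set.mem_setOf_eq, Set.mem_inter_iff, Set.mem_iInter, Set.mem_compl_iff,
      Set.mem_preimage]
    constructor
    · rintro ⟨h1, h2⟩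
      refine ⟨fun j hc => h1 j (by simpa using (arc_zero_iff 0 (z j)).2 (by simpa using hc)),
        fun i hp => ⟨fun hc => (h2 i hp).1 ((arc_zero_iff _ _).2 hc),
          fun j hc => (h2 i hp).2 j ((arc_zero_iff _ _).2 hc)⟩⟩
    · rintro ⟨h1, h2⟩
      refine ⟨fun j hc => h1 j (by simpa using (arc_zero_iff 0 (z j)).1 hc),
        fun i hp => ⟨fun hc => (h2 i hp).1 ((arc_zero_iff _ _).1 hc),
          fun j hc => (h2 i hp).2 j ((arc_zero_iff _ _).1 hc)⟩⟩
  rw [this]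
  refine MeasurableSet.inter ?_ ?_
  · exact MeasurableSet.iInter fun j =>
      ((measurable_pi_apply j) (measurable_arcZero ha1)).compl
  · refine MeasurableSet.iInter fun i => MeasurableSet.iInter fun _ => MeasurableSet.inter ?_ ?_
    · exact ((by fun_prop : Measurable fun z : Fin n → AddCircle (1:ℝ) => 0 - z i) (measurable_arcZero ha1)).compl
    · exact MeasurableSet.iInter fun j =>
        (((measurable_pi_apply j).sub (measurable_pi_apply i)) (measurable_arcZero ha1)).compl

lemma rho_compl_null : rho (Set.Ioc (0:ℝ) 1)ᶜ = 0 := by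
  unfold rho
  rw [Measure.restrict_apply (measurableSet_Ioc.compl)]
  simp

lemma D0_measure {a : ℝ} (ha : 0 < a) (ha1 : a < 1) {n : ℕ} (p : Fin n → Prop)
    [DecidablePred p] :
    (Measure.pi fun _ : Fin n => (volume : Measure (AddCircle (1:ℝ)))) (D0set a p)
      = Measure.pi (fun _ : Fin n => rho) (Ehat a p) := by
  classical
  have hq : MeasurePreserving (fun (y : Fin n → ℝ) (j : Fin n) => ((y j : ℝ) : AddCircle (1:ℝ)))
      (Measure.pi fun _ => rho) (Measure.pi fun _ => volume) := by
    apply measurePreserving_pi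
    intro j
    have h := AddCircle.measurePreserving_mk 1 0
    rw [zero_add] at h
    exact h
  rw [← hq.measure_preimage (measurable_D0set ha1 p).nullMeasurableSet]
  set q := fun (y : Fin n → ℝ) (j : Fin n) => ((y j : ℝ) : AddCircle (1:ℝ)) with hqdef
  set Nbad : Set (Fin n → ℝ) := (⋃ j, {y | y j ∉ Set.Ioc (0:ℝ) 1})
      ∪ ⋃ i : {j // p j}, {y | y (i:Fin n) = 1} with hNbad
  have hNnull : Measure.pi (fun _ : Fin n => rho) Nbad = 0 := by
    rw [hNbad]
    refine measure_union_null ?_ ?_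
    · refine measure_iUnion_null fun j => ?_
      have hsub : {y : Fin n → ℝ | y j ∉ Set.Ioc (0:ℝ) 1}
          ⊆ Set.univ.pi (fun t => if t = j then (Set.Ioc (0:ℝ) 1)ᶜ else Set.univ) := by
        intro y hy
        refine Set.mem_univ_pi.2 (fun t => ?_)
        by_cases h : t = j
        · subst h; simpa using hy
        · simp [h]
      refine measure_mono_null hsub ?_
      rw [Measure.pi_pi]
      refine Finset.prod_eq_zero (Finset.mem_univ j) ?_
      simp [rho_compl_null]
    · exact measure_iUnion_null fun i => pi_null_hyper _ _ _ (rho_singleton 1)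
  have hkey : (q ⁻¹' D0set a p) \ Nbad = Ehat a p \ Nbad := by
    ext y
    simp only [Set.mem_diff, Set.mem_preimage]
    constructor
    all_goals {
      rintro ⟨hmem, hgood⟩
      refine ⟨?_, hgood⟩
      have hbox : ∀ j, y j ∈ Set.Ioc (0:ℝ) 1 := by
        intro j
        by_contra hc
        exact hgood (Or.inl (Set.mem_iUnion.2 ⟨j, hc⟩))
      have hne1 : ∀ i, p i → y i ≠ 1 := by
        intro i hpi hc
        exact hgood (Or.inr (Set.mem_iUnion.2 ⟨⟨i, hpi⟩, hc⟩))
      -- basic equivalences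
      have piece1 : ∀ j, (¬ Arc a 0 (((y j : ℝ)) : AddCircle (1:ℝ))) ↔ y j ∈ Set.Ioc a 1 := by
        intro j
        rw [show (0 : AddCircle (1:ℝ)) = ((0:ℝ) : AddCircle (1:ℝ)) from rfl,
          arc_iff_fract ha1 0 (y j), sub_zero]
        rcases eq_or_lt_of_le (hbox j).2 with h1 | h1
        · rw [h1]
          simp only [Int.fract_one]
          constructor
          · intro _; exact ⟨by linarith, le_refl 1⟩
          · intro _ hc; exact absurd hc.1 (lt_irrefl 0)
        · rw [Int.fract_eq_self.2 ⟨le_of_lt (hbox j).1, h1⟩]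
          simp only [Set.mem_Ioc]
          constructor
          · intro h; exact ⟨by
              rcases lt_or_ge a (y j) with h2 | h2
              · exact h2
              · exact absurd ⟨(hbox j).1, h2⟩ h, le_of_lt h1⟩
          · intro h hc; linarith [h.1, hc.2]
      have piece2 : ∀ i, p i → ((¬ Arc a (((y i : ℝ)) : AddCircle (1:ℝ)) 0) ↔ y i < 1 - a) := by
        intro i hpi
        have hi1 : y i < 1 := lt_of_le_of_ne (hbox i).2 (hne1 i hpi)
        rw [show (0 : AddCircle (1:ℝ)) = ((0:ℝ) : AddCircle (1:ℝ)) from rfl,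
          arc_iff_fract ha1 (y i) 0, zero_sub]
        have hfr : Int.fract (y i) ≠ 0 := by
          rw [Int.fract_eq_self.2 ⟨le_of_lt (hbox i).1, hi1⟩]
          exact ne_of_gt (hbox i).1
        rw [Int.fract_neg hfr, Int.fract_eq_self.2 ⟨le_of_lt (hbox i).1, hi1⟩]
        simp only [Set.mem_Ioc]
        constructor
        · intro h
          by_contra hc
          push_neg at hc
          exact h ⟨by linarith, by linarith⟩
        · intro h hc
          linarith [hc.2]
      have piece3 : ∀ i, p i → ∀ j, y j ∈ Set.Ioc a 1 → y i ∈ Set.Ioc a 1 → y i < 1 - a →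
          ((¬ Arc a (((y i : ℝ)) : AddCircle (1:ℝ)) (((y j : ℝ)) : AddCircle (1:ℝ)))
            ↔ y j ∉ Set.Ioc (y i) (y i + a)) := by
        intro i hpi j hj hi hi2
        rw [arc_iff_fract ha1 (y i) (y j)]
        set d := y j - y i with hd
        rcases le_or_gt 0 d with hd0 | hd0
        · have hfr : Int.fract d = d := Int.fract_eq_self.2 ⟨hd0, by
            rw [hd]; linarith [hj.2, hi.1]⟩
          rw [hfr]
          simp only [Set.mem_Ioc]
          constructor
          · intro h hc
            exact h ⟨by linarith [hc.1], by linarith [hc.2]⟩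
          · intro h hc
            exact h ⟨by linarith [hc.1], by linarith [hc.2]⟩
        · have hdm1 : -1 < d := by rw [hd]; linarith [hj.1, hi.2]
          have hfr : Int.fract d = d + 1 := by
            have h2 := Int.fract_add_intCast d 1
            push_cast at h2
            rw [← h2, Int.fract_eq_self.2 ⟨by linarith, by linarith⟩]
          rw [hfr]
          simp only [Set.mem_Ioc]
          constructor
          · intro _ hc
            linarith [hc.1]
          · intro _ hc
            -- d + 1 ∈ (0,a] impossible : d+1 > a since d > 2a-1 > a-1
            have : d > 2*a - 1 := by rw [hd]; linarith [hj.1, hi2]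
            linarith [hc.2]
      -- use the pieces
      first
      | { -- forward : D0 → Ehat
          obtain ⟨h1, h2⟩ := hmem
          have hbox' : ∀ j, y j ∈ Set.Ioc a 1 := fun j => (piece1 j).1 (h1 j)
          have hsmall : ∀ i, (hpi : p i) → y i < 1 - a :=
            fun i hpi => (piece2 i hpi).1 (h2 i hpi).1
          exact ⟨hbox', fun i hpi =>
            ⟨hsmall i hpi, fun j => (piece3 i hpi j (hbox' j) (hbox' i) (hsmall i hpi)).1
              ((h2 i hpi).2 j)⟩⟩ }
      | { -- backward : Ehat → D0
          obtain ⟨hbox', hcond⟩ := hmem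
          refine ⟨fun j => (piece1 j).2 (hbox' j), fun i hpi => ?_⟩
          refine ⟨(piece2 i hpi).2 (hcond i hpi).1, fun j => ?_⟩
          exact (piece3 i hpi j (hbox' j) (hbox' i) (hcond i hpi).1).2 ((hcond i hpi).2 j) }
    }
  calc Measure.pi (fun _ : Fin n => rho) (q ⁻¹' D0set a p)
      = Measure.pi (fun _ : Fin n => rho) ((q ⁻¹' D0set a p) \ Nbad) :=
        (measure_diff_null hNnull).symm
    _ = Measure.pi (fun _ : Fin n => rho) (Ehat a p \ Nbad) := by rw [hkey]
    _ = Measure.pi (fun _ : Fin n => rho) (Ehat a p) := measure_diff_null hNnull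

lemma core_measure {a : ℝ} (ha : 0 < a) (ha1 : a < 1) {n : ℕ} (S : Finset (Fin (n+1)))
    (hS : S.Nonempty) :
    (Measure.pi fun _ : Fin (n+1) => (volume : Measure (AddCircle (1:ℝ))))
        (⋂ i ∈ S, Bset a i)
      = ENNReal.ofReal (1 - S.card * a) ^ n := by
  classical
  obtain ⟨i0, hi0⟩ := hS
  set p : Fin n → Prop := fun j => i0.succAbove j ∈ S with hp
  have hcard1 : 1 ≤ S.card := Finset.card_pos.2 ⟨i0, hi0⟩
  set L : ℕ := S.card - 1 with hLdef
  have hL : Fintype.card {j // p j} = L := by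
    have he : {j // p j} ≃ {i // i ∈ S.erase i0} := by
      refine Equiv.ofBijective (fun j => ⟨i0.succAbove j.1,
        Finset.mem_erase.2 ⟨Fin.succAbove_ne i0 j.1, j.2⟩⟩) ⟨?_, ?_⟩
      · intro j j' hjj
        have h2 : i0.succAbove j.1 = i0.succAbove j'.1 := congrArg Subtype.val hjj
        exact Subtype.ext (Fin.succAbove_right_injective h2)
      · rintro ⟨i, hi⟩
        obtain ⟨hne, hiS⟩ := Finset.mem_erase.1 hi
        obtain ⟨j, hj⟩ := Fin.exists_succAbove_eq hne
        exact ⟨⟨j, by rw [hp]; simp only [hj]; exact hiS⟩, Subtype.ext hj⟩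
    rw [Fintype.card_congr he, Fintype.card_coe, Finset.card_erase_of_mem hi0]
  have hLn : L ≤ n := by
    have h1 : S.card ≤ n + 1 := by
      have := Finset.card_le_univ S
      rwa [Fintype.card_fin] at this
    omega
  have hR : Fintype.card {j // ¬ p j} = n - L := by
    rw [Fintype.card_subtype_compl, hL, Fintype.card_fin]
  -- measure-preserving reduction to the product
  set ν1 : Measure (AddCircle (1:ℝ)) := volume with hν1
  have hmp1 := measurePreserving_piFinSuccAbove (fun _ : Fin (n+1) => ν1) i0
  have hgm : Measurable (Function.uncurry fun (c : AddCircle (1:ℝ))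
      (w : Fin n → AddCircle (1:ℝ)) => fun j => w j - c) := by
    apply measurable_pi_lambda
    intro j
    exact ((measurable_pi_apply j).comp' measurable_snd).sub measurable_fst
  have hmap : ∀ c : AddCircle (1:ℝ),
      Measure.map (fun w : Fin n → AddCircle (1:ℝ) => fun j => w j - c)
        (Measure.pi fun _ => ν1) = Measure.pi fun _ => ν1 := by
    intro c
    have heq : (fun w : Fin n → AddCircle (1:ℝ) => fun j => w j - c)
        = fun w => w + (- fun _ => c) := by
      funext w j; simp [sub_eq_add_neg]
    rw [heq]
    exact map_add_right_eq_self _ _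
  have hmp2 : MeasurePreserving
      (fun q : AddCircle (1:ℝ) × (Fin n → AddCircle (1:ℝ)) => (q.1, fun j => q.2 j - q.1))
      ((ν1).prod (Measure.pi fun _ : Fin n => ν1))
      ((ν1).prod (Measure.pi fun _ : Fin n => ν1)) :=
    (MeasurePreserving.id ν1).skew_product hgm (Filter.Eventually.of_forall hmap)
  have hmp3 := hmp2.comp hmp1
  have hsetD : (⋂ i ∈ S, Bset a i)
      = ((fun q : AddCircle (1:ℝ) × (Fin n → AddCircle (1:ℝ)) => (q.1, fun j => q.2 j - q.1))
          ∘ (MeasurableEquiv.piFinSuccAbove (fun _ => AddCircle (1:ℝ)) i0))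
        ⁻¹' (Set.univ ×ˢ D0set a p) := by
    ext x
    simp only [Set.mem_iInter, Set.mem_preimage, Function.comp_apply, Set.mem_prod,
      Set.mem_univ, true_and, Bset, Set.mem_setOf_eq, D0set]
    have happly : (MeasurableEquiv.piFinSuccAbove (fun _ => AddCircle (1:ℝ)) i0) x
        = (x i0, fun j => x (i0.succAbove j)) := rfl
    rw [happly]
    dsimp only
    constructor
    · intro h
      refine ⟨fun j hc => ?_, fun j' hpj' => ⟨fun hc => ?_, fun j hc => ?_⟩⟩
      · rw [show (0 : AddCircle (1:ℝ)) = x i0 - x i0 from (sub_self _).symm] at hc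
        exact h i0 hi0 (i0.succAbove j) ((arc_sub _ _ _).1 hc)
      · rw [show (0 : AddCircle (1:ℝ)) = x i0 - x i0 from (sub_self _).symm] at hc
        exact h (i0.succAbove j') hpj' i0 ((arc_sub _ _ _).1 hc)
      · exact h (i0.succAbove j') hpj' (i0.succAbove j) ((arc_sub _ _ _).1 hc)
    · rintro ⟨h1, h2⟩ i hiS j
      by_cases hii0 : i = i0
      · subst hii0
        by_cases hjj0 : j = i
        · subst hjj0
          exact not_arc_self ha1 _
        · obtain ⟨j'', hj''⟩ := Fin.exists_succAbove_eq hjj0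
          intro hc
          refine h1 j'' ?_
          rw [show (0 : AddCircle (1:ℝ)) = x i - x i from (sub_self _).symm, hj'']
          exact (arc_sub _ _ _).2 hc
      · obtain ⟨j', hj'⟩ := Fin.exists_succAbove_eq hii0
        have hpj' : p j' := by rw [hp]; simp only [hj']; exact hiS
        by_cases hjj0 : j = i0
        · subst hjj0
          intro hc
          refine (h2 j' hpj').1 ?_
          rw [show (0 : AddCircle (1:ℝ)) = x j - x j from (sub_self _).symm, hj']
          exact (arc_sub _ _ _).2 hc
        · obtain ⟨j'', hj''⟩ := Fin.exists_succAbove_eq hjj0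
          intro hc
          refine (h2 j' hpj').2 j'' ?_
          rw [hj', hj'']
          exact (arc_sub _ _ _).2 hc
  rw [hsetD, hmp3.measure_preimage
    (MeasurableSet.prod MeasurableSet.univ (measurable_D0set ha1 p)).nullMeasurableSet]
  rw [Measure.prod_prod]
  rw [hν1, AddCircle.measure_univ]
  rw [D0_measure ha ha1 p, Ehat_measure ha ha1 p L hL, hR]
  rw [ENNReal.ofReal_one, one_mul, ← pow_add]
  have hexp : L + (n - L) = n := by omega
  rw [hexp]
  congr 2
  have : ((L:ℝ)) = (S.card : ℝ) - 1 := by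
    rw [hLdef]
    push_cast [Nat.cast_sub hcard1]
    ring
  rw [this]
  ring

end StevensProof

open StevensProof in
/-- Stevens' theorem: if `k` arcs of fixed length `a ∈ (0,1)` have their left endpoints
sampled i.i.d. uniformly on the circle `ℝ/ℤ` of circumference 1, then the probability that
the arcs cover the circle equals `Σ_{l=0}^{⌊1/a⌋} (-1)^l C(k,l) (1-la)^(k-1)`. -/
theorem stmt7 (k : ℕ) (hk : 1 ≤ k) (a : ℝ) (ha : 0 < a) (ha1 : a < 1) :
    (Measure.pi fun _ : Fin k => (volume : Measure (AddCircle (1:ℝ))))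
      {x : Fin k → AddCircle (1:ℝ) |
        ∀ y : AddCircle (1:ℝ), ∃ i : Fin k, ∃ t ∈ Set.Icc (0:ℝ) a, y = x i + (t : AddCircle (1:ℝ))}
    = ENNReal.ofReal
        (∑ l ∈ Finset.range (⌊1 / a⌋₊ + 1),
          (-1 : ℝ) ^ l * (k.choose l : ℝ) * (1 - l * a) ^ (k - 1)) := by
  classical
  obtain ⟨n, rfl⟩ : ∃ n, k = n + 1 := ⟨k - 1, by omega⟩
  set ν := Measure.pi fun _ : Fin (n+1) => (volume : Measure (AddCircle (1:ℝ))) with hν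
  haveI : IsProbabilityMeasure ν := by
    constructor
    rw [hν, show (Set.univ : Set (Fin (n+1) → AddCircle (1:ℝ)))
        = Set.univ.pi (fun _ => Set.univ) by simp, Measure.pi_pi]
    simp [AddCircle.measure_univ]
  -- rewrite the event
  have hevent : {x : Fin (n+1) → AddCircle (1:ℝ) |
        ∀ y : AddCircle (1:ℝ), ∃ i, ∃ t ∈ Set.Icc (0:ℝ) a, y = x i + (t : AddCircle (1:ℝ))}
      = Set.univ ∩ ⋂ i ∈ (Finset.univ : Finset (Fin (n+1))), (Bset a i)ᶜ := by
    ext x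
    simp only [Set.mem_setOf_eq, Set.mem_inter_iff, Set.mem_univ, true_and, Set.mem_iInter,
      Set.mem_compl_iff, Bset, Finset.mem_univ, forall_const]
    rw [cover_iff ha ha1 (by omega) x]
    constructor
    · intro h i hc
      obtain ⟨j, hj⟩ := h i
      exact hc j hj
    · intro h i
      by_contra hc
      push_neg at hc
      exact h i hc
  -- inclusion-exclusion
  have hIE := incl_excl ν (Bset a) (fun i => measurable_Bset ha1 i) Finset.univ
    Set.univ MeasurableSet.univ
  -- value of each intersection
  have hval : ∀ T : Finset (Fin (n+1)),
      (ν (Set.univ ∩ ⋂ i ∈ T, Bset a i)).toReal = (max (1 - T.card * a) 0)^n := by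
    intro T
    rcases T.eq_empty_or_nonempty with rfl | hT
    · simp only [Finset.card_empty, Nat.cast_zero, zero_mul, sub_zero, max_eq_left zero_le_one,
        one_pow]
      simp [measure_univ]
    · rw [Set.univ_inter, hν, core_measure ha ha1 T hT]
      rw [ENNReal.toReal_pow, ENNReal.toReal_ofReal']
  rw [hevent, show ν (Set.univ ∩ ⋂ i ∈ (Finset.univ : Finset (Fin (n+1))), (Bset a i)ᶜ)
      = ENNReal.ofReal ((ν (Set.univ ∩ ⋂ i ∈ (Finset.univ : Finset (Fin (n+1))), (Bset a i)ᶜ)).toReal)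
      from (ENNReal.ofReal_toReal (measure_ne_top _ _)).symm]
  congr 1
  rw [hIE]
  rw [Finset.sum_congr rfl (fun T _ => by rw [hval T])]
  -- now a purely real computation
  rw [Finset.sum_powerset]
  rw [Finset.card_univ, Fintype.card_fin]
  have hinner : ∀ l ∈ Finset.range (n + 1 + 1),
      (∑ T ∈ Finset.powersetCard l (Finset.univ : Finset (Fin (n+1))),
        (-1:ℝ)^T.card * (max (1 - T.card * a) 0)^n)
      = ((n+1).choose l : ℝ) * ((-1:ℝ)^l * (max (1 - l * a) 0)^n) := by
    intro l _
    rw [Finset.sum_congr rfl (fun T hT => by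
      rw [(Finset.mem_powersetCard.1 hT).2])]
    rw [Finset.sum_const, Finset.card_powersetCard, Finset.card_univ, Fintype.card_fin,
      nsmul_eq_mul]
  rw [Finset.sum_congr rfl hinner]
  -- sum over range (n+2) of t l  =  sum over range (F+1) of s l
  set F := ⌊1 / a⌋₊ with hF
  have hF1 : 1 ≤ F := by
    rw [hF]
    exact Nat.le_floor (by rw [Nat.cast_one]; exact one_le_one_div ha (le_of_lt ha1))
  have hzero : ∀ l, F < l → ((n+1).choose l : ℝ) * ((-1:ℝ)^l * (max (1 - l * a) 0)^n) = 0 := by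
    intro l hl
    by_cases hln : n + 1 < l
    · rw [Nat.choose_eq_zero_of_lt hln]
      simp
    · -- l ≤ n+1 and l > F ≥ 1 hence l ≥ 2 so n ≥ 1 ; and l*a > 1
      have hla : 1 < (l:ℝ) * a := by
        have h1 : (1:ℝ)/a < F + 1 := Nat.lt_floor_add_one _
        have h2 : (F:ℝ) + 1 ≤ l := by exact_mod_cast hl
        have h3 : (1:ℝ)/a < l := lt_of_lt_of_le h1 h2
        calc (1:ℝ) = (1/a) * a := by field_simp
        _ < l * a := by apply mul_lt_mul_of_pos_right h3 ha
      have hmax : max (1 - (l:ℝ) * a) 0 = 0 := max_eq_right (by linarith)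
      rw [hmax]
      have hn : n ≠ 0 := by omega
      rw [zero_pow hn]
      simp
  have hstep1 : ∑ l ∈ Finset.range (n + 1 + 1),
        ((n+1).choose l : ℝ) * ((-1:ℝ)^l * (max (1 - l * a) 0)^n)
      = ∑ l ∈ Finset.range (max (n+1) F + 1),
        ((n+1).choose l : ℝ) * ((-1:ℝ)^l * (max (1 - l * a) 0)^n) := by
    refine Finset.sum_subset (Finset.range_subset_range.2 (by omega)) ?_
    intro l hl hnl
    rw [Finset.mem_range] at hl
    rw [Finset.mem_range, not_lt] at hnl
    rw [Nat.choose_eq_zero_of_lt (by omega)]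
    simp
  have hstep2 : ∑ l ∈ Finset.range (max (n+1) F + 1),
        ((n+1).choose l : ℝ) * ((-1:ℝ)^l * (max (1 - l * a) 0)^n)
      = ∑ l ∈ Finset.range (F + 1),
        ((n+1).choose l : ℝ) * ((-1:ℝ)^l * (max (1 - l * a) 0)^n) := by
    refine (Finset.sum_subset (Finset.range_subset_range.2 (by omega)) ?_).symm
    intro l hl hnl
    rw [Finset.mem_range, not_lt] at hnl
    exact hzero l (by omega)
  have hstep3 : ∑ l ∈ Finset.range (F + 1),
        ((n+1).choose l : ℝ) * ((-1:ℝ)^l * (max (1 - l * a) 0)^n)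
      = ∑ l ∈ Finset.range (F + 1),
        (-1:ℝ)^l * ((n+1).choose l : ℝ) * (1 - l * a) ^ (n + 1 - 1) := by
    refine Finset.sum_congr rfl (fun l hl => ?_)
    rw [Finset.mem_range] at hl
    have hla : (l:ℝ) * a ≤ 1 := by
      have h1 : (l:ℕ) ≤ F := by omega
      have h2 : (l:ℝ) ≤ 1/a := by
        calc (l:ℝ) ≤ F := by exact_mod_cast h1
        _ ≤ 1/a := Nat.floor_le (by positivity)
      calc (l:ℝ) * a ≤ (1/a) * a := mul_le_mul_of_nonneg_right h2 (le_of_lt ha)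
      _ = 1 := by field_simp
    rw [max_eq_left (by linarith), Nat.add_sub_cancel]
    ring
  rw [hstep1, hstep2, hstep3]
end

section
/- For i.i.d. uniform samples X_n of size n from the circle of circumference 1, the expected Euler characteristic of the Čech complex satisfies E[χ(Čech(X_n, r))] = 1 + Σ_{k=1}^{n} (−1)^k C(n,k) Q_k(1/2 − r), where Q_k(s) is the probability that open arcs of radius s centered at k i.i.d. uniform points cover the circle. -/
open MeasureTheory
open scoped Classical

lemma norm_add_half (z : AddCircle (1:ℝ)) :
    ‖z + (((1:ℝ)/2 : ℝ) : AddCircle (1:ℝ))‖ = 1/2 - ‖z‖ := by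
  obtain ⟨x, rfl⟩ := QuotientAddGroup.mk_surjective z
  set t : ℝ := x - round x with ht
  have hzx : ((x : ℝ) : AddCircle (1:ℝ)) = ((t : ℝ) : AddCircle (1:ℝ)) := by
    rw [ht]
    have : ((x - t : ℝ) : AddCircle (1:ℝ)) = 0 := by
      rw [AddCircle.coe_eq_zero_iff]
      exact ⟨round x, by simp [ht]⟩
    have := congrArg (fun z => z + ((t:ℝ) : AddCircle (1:ℝ))) this
    rw [← ht]
    simpa [sub_add_cancel] using this
  have habs : |t| ≤ 1/2 := abs_sub_round x
  have hnorm_t : ‖((t:ℝ) : AddCircle (1:ℝ))‖ = |t| :=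
    (AddCircle.norm_coe_eq_abs_iff 1 one_ne_zero).mpr (by simpa using habs)
  rw [hzx, hnorm_t]
  rcases lt_or_ge t 0 with h | h
  · have : ((t:ℝ) : AddCircle (1:ℝ)) + (((1:ℝ)/2 : ℝ) : AddCircle (1:ℝ))
        = ((t + 1/2 : ℝ) : AddCircle (1:ℝ)) := (AddCircle.coe_add (p := (1:ℝ)) t (1/2)).symm
    rw [this, (AddCircle.norm_coe_eq_abs_iff 1 one_ne_zero).mpr (by rw [abs_of_nonneg (by cases abs_le.1 habs; linarith)]; simp; cases abs_le.1 habs <;> linarith)]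
    rw [abs_of_nonneg (by cases abs_le.1 habs; linarith), abs_of_neg h]; ring
  · have : ((t:ℝ) : AddCircle (1:ℝ)) + (((1:ℝ)/2 : ℝ) : AddCircle (1:ℝ))
        = ((t - 1/2 : ℝ) : AddCircle (1:ℝ)) := by
      have h1 : ((1 : ℝ) : AddCircle (1:ℝ)) = 0 := by
        rw [AddCircle.coe_eq_zero_iff]; exact ⟨1, by simp⟩
      have h2 : ((t + 1/2 : ℝ) : AddCircle (1:ℝ)) = ((t - 1/2 : ℝ) : AddCircle (1:ℝ)) := by
        rw [show (t+1/2 : ℝ) = (t - 1/2) + 1 by ring, AddCircle.coe_add, h1, add_zero]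
      rw [← h2, ← AddCircle.coe_add (p := (1:ℝ)) t (1/2)]
    rw [this, (AddCircle.norm_coe_eq_abs_iff 1 one_ne_zero).mpr (by rw [abs_of_nonpos (by cases abs_le.1 habs; linarith)]; simp; cases abs_le.1 habs <;> linarith)]
    rw [abs_of_nonpos (by cases abs_le.1 habs; linarith), abs_of_nonneg h]; ring

lemma dist_add_half (c x : AddCircle (1:ℝ)) :
    dist (c + (((1:ℝ)/2 : ℝ) : AddCircle (1:ℝ))) x = 1/2 - dist c x := by
  rw [dist_eq_norm, dist_eq_norm, add_sub_right_comm, norm_add_half]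

local notation "S" => AddCircle (1:ℝ)

instance : IsProbabilityMeasure (volume : Measure S) :=
  ⟨by rw [AddCircle.measure_univ]; simp⟩

lemma isClosed_A (k : ℕ) (r : ℝ) :
    IsClosed {x : Fin k → S | ∃ c : S, ∀ i, dist c (x i) ≤ r} := by
  have hC : IsClosed {p : S × (Fin k → S) | ∀ i, dist p.1 (p.2 i) ≤ r} := by
    have : {p : S × (Fin k → S) | ∀ i, dist p.1 (p.2 i) ≤ r}
        = ⋂ i, {p : S × (Fin k → S) | dist p.1 (p.2 i) ≤ r} := by
      ext p; simp
    rw [this]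
    exact isClosed_iInter fun i =>
      isClosed_Iic.preimage (continuous_fst.dist ((continuous_apply i).comp continuous_snd))
  have himg : {x : Fin k → S | ∃ c : S, ∀ i, dist c (x i) ≤ r}
      = Prod.snd '' {p : S × (Fin k → S) | ∀ i, dist p.1 (p.2 i) ≤ r} := by
    ext x
    simp only [Set.mem_image, Set.mem_setOf_eq, Prod.exists, exists_and_right, exists_eq_right]
  rw [himg]
  exact isClosedMap_snd_of_compactSpace _ hC

lemma marginal {k n : ℕ} (e : Fin k → Fin n) (he : Function.Injective e)
    (A : Set (Fin k → S)) (hA : MeasurableSet A) :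
    (Measure.pi fun _ : Fin n => (volume : Measure S)) ((fun x => x ∘ e) ⁻¹' A)
      = (Measure.pi fun _ : Fin k => (volume : Measure S)) A := by
  have hmeas : Measurable (fun x : Fin n → S => x ∘ e) :=
    measurable_pi_lambda _ fun j => measurable_pi_apply (e j)
  have hmap : Measure.map (fun x : Fin n → S => x ∘ e)
      (Measure.pi fun _ : Fin n => (volume : Measure S))
      = Measure.pi fun _ : Fin k => (volume : Measure S) := by
    refine (Measure.pi_eq fun s hs => ?_).symm
    rw [Measure.map_apply hmeas (MeasurableSet.univ_pi hs)]
    have hpre : (fun x : Fin n → S => x ∘ e) ⁻¹' (Set.univ.pi s)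
        = Set.univ.pi (fun i : Fin n =>
            if h : ∃ j, e j = i then s h.choose else Set.univ) := by
      ext x
      simp only [Set.mem_preimage, Set.mem_pi, Set.mem_univ, forall_true_left, Function.comp]
      constructor
      · intro hx i
        by_cases h : ∃ j, e j = i
        · rw [dif_pos h]
          have := hx h.choose
          rwa [h.choose_spec] at this
        · rw [dif_neg h]; trivial
      · intro hx j
        have := hx (e j)
        rw [dif_pos ⟨j, rfl⟩] at this
        have hj : (⟨j, rfl⟩ : ∃ j', e j' = e j).choose = j :=
          he (⟨j, rfl⟩ : ∃ j', e j' = e j).choose_spec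
        rwa [hj] at this
    rw [hpre, Measure.pi_pi]
    have : ∀ i ∈ (Finset.univ : Finset (Fin n)),
        i ∉ Finset.univ.image e →
        (volume : Measure S) (if h : ∃ j, e j = i then s h.choose else Set.univ) = 1 := by
      intro i _ hi
      rw [dif_neg (by simpa [Finset.mem_image] using hi)]
      exact measure_univ
    rw [← Finset.prod_subset (Finset.subset_univ (Finset.univ.image e)) this,
      Finset.prod_image (fun a _ b _ h => he h)]
    refine Finset.prod_congr rfl fun j _ => ?_
    rw [dif_pos ⟨j, rfl⟩]
    have hj : (⟨j, rfl⟩ : ∃ j', e j' = e j).choose = j :=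
      he (⟨j, rfl⟩ : ∃ j', e j' = e j).choose_spec
    rw [hj]
  rw [← hmap, Measure.map_apply hmeas hA]



/-- The Euler characteristic of the Čech complex (nerve of closed arcs of radius `s`
centered at the points `x i`) of a finite point configuration on the circle `ℝ/ℤ`. -/
noncomputable def cechEuler {n : ℕ} (x : Fin n → AddCircle (1:ℝ)) (s : ℝ) : ℝ :=
  ∑ σ ∈ Finset.univ.powerset.filter (fun σ : Finset (Fin n) => σ.Nonempty),
    if ∃ c : AddCircle (1:ℝ), ∀ i ∈ σ, dist c (x i) ≤ s then (-1 : ℝ) ^ (σ.card - 1) else 0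

/-- `coverProb k s` is the probability that open arcs of radius `s` centered at `k`
i.i.d. uniform points cover the circle `ℝ/ℤ` of circumference 1. -/
noncomputable def coverProb (k : ℕ) (s : ℝ) : ℝ :=
  ((Measure.pi fun _ : Fin k => (volume : Measure (AddCircle (1:ℝ))))
    {x : Fin k → AddCircle (1:ℝ) | ∀ y : AddCircle (1:ℝ), ∃ i, dist y (x i) < s}).toReal

section main
variable (r : ℝ)

/-- the event that all k closed balls of radius r have a common point -/
def Aset (k : ℕ) : Set (Fin k → AddCircle (1:ℝ)) :=
  {y | ∃ c : AddCircle (1:ℝ), ∀ i, dist c (y i) ≤ r}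

lemma Aset_meas (k : ℕ) : MeasurableSet (Aset r k) := (isClosed_A k r).measurableSet

lemma Aset_eq_compl (k : ℕ) :
    Aset r k = {y : Fin k → AddCircle (1:ℝ) | ∀ z, ∃ i, dist z (y i) < 1/2 - r}ᶜ := by
  ext y
  simp only [Aset, Set.mem_setOf_eq, Set.mem_compl_iff, not_forall, not_exists, not_lt]
  constructor
  · rintro ⟨c, hc⟩
    exact ⟨c + (((1:ℝ)/2 : ℝ) : AddCircle (1:ℝ)), fun i => by
      rw [dist_add_half]; linarith [hc i]⟩
  · rintro ⟨z, hz⟩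
    exact ⟨z + (((1:ℝ)/2 : ℝ) : AddCircle (1:ℝ)), fun i => by
      rw [dist_add_half]; linarith [hz i]⟩

lemma Aset_toReal (k : ℕ) :
    ((Measure.pi fun _ : Fin k => (volume : Measure (AddCircle (1:ℝ)))) (Aset r k)).toReal
      = 1 - coverProb k (1/2 - r) := by
  set μ := Measure.pi fun _ : Fin k => (volume : Measure (AddCircle (1:ℝ)))
  have hCmeas : MeasurableSet
      {y : Fin k → AddCircle (1:ℝ) | ∀ z, ∃ i, dist z (y i) < 1/2 - r} := by
    rw [← MeasurableSet.compl_iff, ← Aset_eq_compl]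
    exact Aset_meas r k
  rw [Aset_eq_compl, measure_compl hCmeas (measure_ne_top _ _), measure_univ,
    ENNReal.toReal_sub_of_le prob_le_one ENNReal.one_ne_top, ENNReal.toReal_one]
  rfl

/-- The expected Euler characteristic of the random Čech complex at radius `r` equals
`1 + Σ_{k=1}^n (-1)^k C(n,k) Q_k(1/2 - r)`, where `Q_k(s)` is the covering probability. -/
theorem stmt9 (n : ℕ) (hn : 1 ≤ n) (r : ℝ) (hr0 : 0 < r) (hr1 : r < 1 / 2) :
    ∫ x : Fin n → AddCircle (1:ℝ), cechEuler x r
        ∂(Measure.pi fun _ : Fin n => (volume : Measure (AddCircle (1:ℝ))))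
    = 1 + ∑ k ∈ Finset.Icc 1 n,
        (-1 : ℝ) ^ k * (n.choose k : ℝ) * coverProb k (1 / 2 - r) := by
  set P := Measure.pi fun _ : Fin n => (volume : Measure (AddCircle (1:ℝ))) with hP
  -- the event for a subset σ
  set E : Finset (Fin n) → Set (Fin n → AddCircle (1:ℝ)) :=
    fun σ => {x | ∃ c : AddCircle (1:ℝ), ∀ i ∈ σ, dist c (x i) ≤ r} with hE
  have hEpre : ∀ σ : Finset (Fin n),
      E σ = (fun x => x ∘ ⇑(σ.orderEmbOfFin rfl)) ⁻¹' (Aset r σ.card) := by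
    intro σ
    ext x
    simp only [hE, Set.mem_setOf_eq, Set.mem_preimage, Aset, Function.comp]
    constructor
    · rintro ⟨c, hc⟩
      exact ⟨c, fun j => hc _ (Finset.orderEmbOfFin_mem σ rfl j)⟩
    · rintro ⟨c, hc⟩
      refine ⟨c, fun i hi => ?_⟩
      have : i ∈ Set.range ⇑(σ.orderEmbOfFin rfl) := by
        rw [Finset.range_orderEmbOfFin]; exact hi
      obtain ⟨j, rfl⟩ := this
      exact hc j
  have hEmeas : ∀ σ : Finset (Fin n), MeasurableSet (E σ) := by
    intro σ
    rw [hEpre σ]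
    exact (measurable_pi_lambda _ fun j => measurable_pi_apply _) (Aset_meas r σ.card)
  have hEval : ∀ σ : Finset (Fin n), (P (E σ)).toReal = 1 - coverProb σ.card (1/2 - r) := by
    intro σ
    rw [hEpre σ, hP,
      marginal (⇑(σ.orderEmbOfFin rfl)) (σ.orderEmbOfFin rfl).injective _ (Aset_meas r σ.card)]
    exact Aset_toReal r σ.card
  -- rewrite the integrand as a sum of indicators
  have hfun : ∀ σ : Finset (Fin n),
      (fun x : Fin n → AddCircle (1:ℝ) =>
        if ∃ c : AddCircle (1:ℝ), ∀ i ∈ σ, dist c (x i) ≤ r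
          then ((-1 : ℝ) ^ (σ.card - 1)) else 0)
      = (E σ).indicator (fun _ => ((-1 : ℝ) ^ (σ.card - 1))) := by
    intro σ
    funext x
    by_cases h : ∃ c : AddCircle (1:ℝ), ∀ i ∈ σ, dist c (x i) ≤ r
    · rw [if_pos h, Set.indicator_of_mem (by exact h)]
    · rw [if_neg h, Set.indicator_of_notMem (by exact h)]
  have hint : ∀ σ ∈ Finset.univ.powerset.filter (fun σ : Finset (Fin n) => σ.Nonempty),
      Integrable (fun x : Fin n → AddCircle (1:ℝ) =>
        if ∃ c : AddCircle (1:ℝ), ∀ i ∈ σ, dist c (x i) ≤ r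
          then ((-1 : ℝ) ^ (σ.card - 1)) else 0) P := by
    intro σ _
    rw [hfun σ]
    exact (integrable_const _).indicator (hEmeas σ)
  unfold cechEuler
  rw [integral_finset_sum _ hint]
  have hterm : ∀ σ : Finset (Fin n),
      (∫ x, (if ∃ c : AddCircle (1:ℝ), ∀ i ∈ σ, dist c (x i) ≤ r
          then ((-1 : ℝ) ^ (σ.card - 1)) else 0) ∂P)
      = (-1 : ℝ) ^ (σ.card - 1) * (1 - coverProb σ.card (1/2 - r)) := by
    intro σ
    rw [hfun σ, integral_indicator_const _ (hEmeas σ), smul_eq_mul, mul_comm, measureReal_def, hEval σ]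
  rw [Finset.sum_congr rfl fun σ _ => hterm σ]
  -- group by cardinality
  set F : ℕ → ℝ := fun k => (-1 : ℝ) ^ (k - 1) * (1 - coverProb k (1/2 - r)) with hF
  have hgroup : ∑ σ ∈ Finset.univ.powerset.filter (fun σ : Finset (Fin n) => σ.Nonempty),
      F σ.card = ∑ k ∈ Finset.Icc 1 n, (n.choose k : ℝ) * F k := by
    rw [Finset.sum_filter, Finset.sum_powerset, Finset.card_univ, Fintype.card_fin]
    have hinner : ∀ j ∈ Finset.range (n + 1),
        (∑ σ ∈ Finset.powersetCard j (Finset.univ : Finset (Fin n)),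
          if σ.Nonempty then F σ.card else 0)
        = if j ≠ 0 then (n.choose j : ℝ) * F j else 0 := by
      intro j hj
      have : ∀ σ ∈ Finset.powersetCard j (Finset.univ : Finset (Fin n)),
          (if σ.Nonempty then F σ.card else 0) = (if j ≠ 0 then F j else 0) := by
        intro σ hσ
        have hcard : σ.card = j := (Finset.mem_powersetCard.mp hσ).2
        have : σ.Nonempty ↔ j ≠ 0 := by
          rw [Finset.nonempty_iff_ne_empty, ← hcard]
          simp [Finset.card_eq_zero]
        rw [hcard] at *
        by_cases h : j ≠ 0
        · rw [if_pos (this.mpr h), if_pos h]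
        · rw [if_neg (fun hne => h (this.mp hne)), if_neg h]
      rw [Finset.sum_congr rfl this, Finset.sum_const, Finset.card_powersetCard,
        Finset.card_univ, Fintype.card_fin, nsmul_eq_mul]
      by_cases h : j ≠ 0
      · rw [if_pos h, if_pos h]
      · rw [if_neg h, if_neg h, mul_zero]
    refine (Finset.sum_congr rfl hinner).trans ?_
    have hsub : Finset.Icc 1 n ⊆ Finset.range (n + 1) := by
      intro j hj
      rw [Finset.mem_Icc] at hj
      rw [Finset.mem_range]
      omega
    have hzero : ∀ j ∈ Finset.range (n + 1), j ∉ Finset.Icc 1 n →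
        (if j ≠ 0 then (n.choose j : ℝ) * F j else 0) = 0 := by
      intro j hj hnot
      rw [Finset.mem_range] at hj
      rw [Finset.mem_Icc] at hnot
      rw [if_neg (by omega)]
    refine ((Finset.sum_subset hsub hzero).symm).trans
      (Finset.sum_congr rfl fun k hk => ?_)
    rw [Finset.mem_Icc] at hk
    rw [if_pos (by omega)]
  -- keys:  Σ_{Icc} (-1)^k * C(n,k) = -1
  have halt : ∑ k ∈ Finset.Icc 1 n, (-1 : ℝ) ^ k * (n.choose k : ℝ) = -1 := by
    have h0 : (∑ m ∈ Finset.range (n + 1), (-1 : ℤ) ^ m * (n.choose m : ℤ)) = 0 :=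
      Int.alternating_sum_range_choose_of_ne (by omega)
    have h1 : (∑ m ∈ Finset.range (n + 1), (-1 : ℝ) ^ m * (n.choose m : ℝ)) = 0 := by
      have := congrArg (fun z : ℤ => (z : ℝ)) h0
      push_cast at this
      simpa using this
    have hins : Finset.range (n + 1) = insert 0 (Finset.Icc 1 n) := by
      ext m; simp [Finset.mem_range, Finset.mem_Icc]; omega
    rw [hins, Finset.sum_insert (by simp)] at h1
    simp only [pow_zero, Nat.choose_zero_right, Nat.cast_one, one_mul] at h1
    linarith
  have hsplit : ∀ k ∈ Finset.Icc 1 n, (n.choose k : ℝ) * F k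
      = (-1 : ℝ) ^ (k - 1) * (n.choose k : ℝ)
        + (-1 : ℝ) ^ k * (n.choose k : ℝ) * coverProb k (1/2 - r) := by
    intro k hk
    have hk1 : 1 ≤ k := (Finset.mem_Icc.mp hk).1
    have hpow : (-1 : ℝ) ^ k = (-1 : ℝ) ^ (k - 1) * (-1) := by
      rw [← pow_succ, Nat.sub_add_cancel hk1]
    rw [hF]
    simp only []
    rw [hpow]; ring
  have hfirst : ∑ k ∈ Finset.Icc 1 n, (-1 : ℝ) ^ (k - 1) * (n.choose k : ℝ) = 1 := by
    have : ∀ k ∈ Finset.Icc 1 n, (-1 : ℝ) ^ (k - 1) * (n.choose k : ℝ)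
        = -((-1 : ℝ) ^ k * (n.choose k : ℝ)) := by
      intro k hk
      have hk1 : 1 ≤ k := (Finset.mem_Icc.mp hk).1
      have hpow : (-1 : ℝ) ^ k = (-1 : ℝ) ^ (k - 1) * (-1) := by
        rw [← pow_succ, Nat.sub_add_cancel hk1]
      rw [hpow]; ring
    rw [Finset.sum_congr rfl this, Finset.sum_neg_distrib, halt]
    norm_num
  calc ∑ σ ∈ Finset.univ.powerset.filter (fun σ : Finset (Fin n) => σ.Nonempty),
        (-1 : ℝ) ^ (σ.card - 1) * (1 - coverProb σ.card (1/2 - r))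
      = ∑ k ∈ Finset.Icc 1 n, (n.choose k : ℝ) * F k := hgroup
    _ = ∑ k ∈ Finset.Icc 1 n, ((-1 : ℝ) ^ (k - 1) * (n.choose k : ℝ)
          + (-1 : ℝ) ^ k * (n.choose k : ℝ) * coverProb k (1/2 - r)) :=
        Finset.sum_congr rfl hsplit
    _ = 1 + ∑ k ∈ Finset.Icc 1 n,
          (-1 : ℝ) ^ k * (n.choose k : ℝ) * coverProb k (1 / 2 - r) := by
        rw [Finset.sum_add_distrib, hfirst]
end main
end

section
/- Let m, n be integers with 2 ≤ m < √n and set r = 1/m − t with t ∈ [0, 1/(m(m+1))]. Then the error term E = Σ_{k=1}^{m−1} C(n,k) (1 − (k/m)(1−mt))^{k−1} ((k/m)(1−mt))^{n−k} satisfies E ≤ e · n^{m−1} · (1 − 1/(m+1))^{n−1}. -/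
lemma aux_exp32 : 2 * Real.exp (3/2) ≤ 3 * Real.exp 1 + 2 := by
  have h3 : Real.exp (3/2) * Real.exp (3/2) = Real.exp 1 * Real.exp 1 * Real.exp 1 := by
    rw [← Real.exp_add, ← Real.exp_add, ← Real.exp_add]; norm_num
  nlinarith [Real.exp_one_lt_d9, Real.exp_one_gt_d9, Real.exp_pos (3/2 : ℝ),
    Real.exp_pos (1 : ℝ)]

lemma aux_sum (N : ℕ) :
    ∑ k ∈ Finset.Icc 1 N, (3/2 : ℝ) ^ (k - 1) / (k.factorial : ℝ) ≤ Real.exp 1 := by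
  have h0 : ∑ k ∈ Finset.range (N+1), (3/2 : ℝ) ^ k / (k.factorial : ℝ) ≤ Real.exp (3/2) :=
    Real.sum_le_exp_of_nonneg (by norm_num) _
  have hins : Finset.range (N+1) = insert 0 (Finset.Icc 1 N) := by
    ext x; simp [Finset.mem_Icc, Finset.mem_range]; omega
  rw [hins, Finset.sum_insert (by simp)] at h0
  simp only [pow_zero, Nat.factorial_zero] at h0
  have h2 : ∑ k ∈ Finset.Icc 1 N, (3/2 : ℝ) ^ k / (k.factorial : ℝ)
      = (3/2) * ∑ k ∈ Finset.Icc 1 N, (3/2 : ℝ) ^ (k - 1) / (k.factorial : ℝ) := by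
    rw [Finset.mul_sum]
    refine Finset.sum_congr rfl fun k hk => ?_
    have hk1 : 1 ≤ k := (Finset.mem_Icc.mp hk).1
    obtain ⟨j, rfl⟩ : ∃ j, k = j + 1 := ⟨k - 1, by omega⟩
    simp only [Nat.add_sub_cancel, pow_succ]
    ring
  have h4 := aux_exp32
  norm_num at h0
  linarith

/-- Error-term bound: for integers `2 ≤ m < √n` and `t ∈ [0, 1/(m(m+1))]`,
`E = Σ_{k=1}^{m-1} C(n,k) (1-(k/m)(1-mt))^(k-1) ((k/m)(1-mt))^(n-k)`
satisfies `E ≤ e · n^(m-1) · (1 - 1/(m+1))^(n-1)`. -/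
theorem stmt13 (m n : ℕ) (hm : 2 ≤ m) (hmn : (m : ℝ) < Real.sqrt n)
    (t : ℝ) (ht0 : 0 ≤ t) (ht1 : t ≤ 1 / ((m : ℝ) * (m + 1))) :
    ∑ k ∈ Finset.Icc 1 (m - 1),
        (n.choose k : ℝ) * (1 - ((k : ℝ) / m) * (1 - m * t)) ^ (k - 1) *
          (((k : ℝ) / m) * (1 - m * t)) ^ (n - k)
      ≤ Real.exp 1 * (n : ℝ) ^ (m - 1) * (1 - 1 / ((m : ℝ) + 1)) ^ (n - 1) := by
  have hm0 : (0 : ℝ) < m := by positivity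
  have hm2 : (2 : ℝ) ≤ m := by exact_mod_cast hm
  have hmn' : m < n := by
    by_contra h
    push_neg at h
    have hnm : (n : ℝ) ≤ m := by exact_mod_cast h
    have : Real.sqrt n ≤ m := by
      have h2 : Real.sqrt n ≤ Real.sqrt ((m : ℝ)^2) := by
        apply Real.sqrt_le_sqrt; nlinarith
      rwa [Real.sqrt_sq (le_of_lt hm0)] at h2
    linarith
  have hn1 : (1 : ℝ) ≤ n := by
    have : 1 ≤ n := by omega
    exact_mod_cast this
  set q : ℝ := (m : ℝ) / (m + 1) with hq
  have hq0 : 0 < q := by positivity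
  have hq1 : q ≤ 1 := by
    rw [hq, div_le_one (by positivity)]; linarith
  have hqeq : 1 - 1 / ((m : ℝ) + 1) = q := by
    rw [hq]; field_simp; ring
  have hkey : (m : ℝ) * t ≤ 1 / ((m : ℝ) + 1) := by
    have h := mul_le_mul_of_nonneg_left ht1 hm0.le
    calc (m : ℝ) * t ≤ m * (1 / ((m : ℝ) * (m + 1))) := h
      _ = 1 / ((m : ℝ) + 1) := by field_simp
  have hmt0 : 0 ≤ 1 - (m : ℝ) * t := by
    have : 1 / ((m : ℝ) + 1) ≤ 1 := by
      rw [div_le_one (by positivity)]; linarith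
    linarith
  have hmt1 : 1 - (m : ℝ) * t ≤ 1 := by
    nlinarith
  rw [hqeq]
  calc ∑ k ∈ Finset.Icc 1 (m - 1),
        (n.choose k : ℝ) * (1 - ((k : ℝ) / m) * (1 - m * t)) ^ (k - 1) *
          (((k : ℝ) / m) * (1 - m * t)) ^ (n - k)
      ≤ ∑ k ∈ Finset.Icc 1 (m - 1),
          (n : ℝ) ^ (m - 1) * q ^ (n - 1) * ((3/2 : ℝ) ^ (k - 1) / (k.factorial : ℝ)) := by
        apply Finset.sum_le_sum
        intro k hk
        obtain ⟨hk1, hk2⟩ := Finset.mem_Icc.mp hk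
        have hkm : (k : ℝ) ≤ (m : ℝ) - 1 := by
          have h1 : (k : ℝ) ≤ ((m - 1 : ℕ) : ℝ) := by exact_mod_cast hk2
          rw [Nat.cast_sub (by omega)] at h1
          simpa using h1
        have hk0 : (0 : ℝ) ≤ k := Nat.cast_nonneg k
        set x : ℝ := ((k : ℝ) / m) * (1 - m * t) with hxdef
        have hx0 : 0 ≤ x := by positivity
        have hxq : x ≤ q := by
          rw [hxdef, hq, div_mul_eq_mul_div, div_le_div_iff₀ hm0 (by positivity)]
          nlinarith [mul_nonneg (mul_nonneg hk0 (by nlinarith : (0:ℝ) ≤ (m:ℝ) * t))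
              (by linarith : (0:ℝ) ≤ (m:ℝ) + 1),
            mul_nonneg (by linarith : (0:ℝ) ≤ (m:ℝ) - 1 - k)
              (by linarith : (0:ℝ) ≤ (m:ℝ) + 1)]
        have hx1 : x ≤ 1 := le_trans hxq hq1
        have hA : (1 - x) ^ (k - 1) ≤ 1 := by
          apply pow_le_one₀ (by linarith) (by linarith)
        have hA0 : (0 : ℝ) ≤ (1 - x) ^ (k - 1) := by
          apply pow_nonneg; linarith
        have hpow_add : q ^ (n - k) * q ^ (k - 1) = q ^ (n - 1) := by
          rw [← pow_add]; congr 1; omega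
        have hq32 : 1 / q ≤ 3 / 2 := by
          rw [hq, one_div_div, div_le_div_iff₀ hm0 (by norm_num : (0:ℝ) < 2)]
          linarith
        have hqsplit : q ^ (n - k) = q ^ (n - 1) * (1 / q) ^ (k - 1) := by
          rw [one_div, inv_pow, ← hpow_add, mul_assoc,
            mul_inv_cancel₀ (pow_ne_zero _ hq0.ne'), mul_one]
        have hx2 : x ^ (n - k) ≤ q ^ (n - 1) * (3/2 : ℝ) ^ (k - 1) := by
          calc x ^ (n - k) ≤ q ^ (n - k) := pow_le_pow_left₀ hx0 hxq _
            _ = q ^ (n - 1) * (1 / q) ^ (k - 1) := hqsplit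
            _ ≤ q ^ (n - 1) * (3/2 : ℝ) ^ (k - 1) := by
                apply mul_le_mul_of_nonneg_left _ (pow_nonneg hq0.le _)
                exact pow_le_pow_left₀ (by positivity) hq32 _
        have hC : (n.choose k : ℝ) ≤ (n : ℝ) ^ (m - 1) / (k.factorial : ℝ) := by
          calc (n.choose k : ℝ) ≤ (n : ℝ) ^ k / (k.factorial : ℝ) :=
              Nat.choose_le_pow_div k n
            _ ≤ (n : ℝ) ^ (m - 1) / (k.factorial : ℝ) := by
                have hpow : (n : ℝ) ^ k ≤ (n : ℝ) ^ (m - 1) :=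
                  pow_le_pow_right₀ hn1 (by omega)
                exact div_le_div_of_nonneg_right hpow
                  (by positivity)
        calc (n.choose k : ℝ) * (1 - x) ^ (k - 1) * x ^ (n - k)
            ≤ ((n : ℝ) ^ (m - 1) / (k.factorial : ℝ)) * 1 *
                (q ^ (n - 1) * (3/2 : ℝ) ^ (k - 1)) := by
              apply mul_le_mul _ hx2 (by positivity) (by positivity)
              apply mul_le_mul hC hA hA0 (by positivity)
          _ = (n : ℝ) ^ (m - 1) * q ^ (n - 1) * ((3/2 : ℝ) ^ (k - 1) / (k.factorial : ℝ)) := by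
              ring
    _ = (n : ℝ) ^ (m - 1) * q ^ (n - 1) *
          ∑ k ∈ Finset.Icc 1 (m - 1), (3/2 : ℝ) ^ (k - 1) / (k.factorial : ℝ) := by
        rw [← Finset.mul_sum]
    _ ≤ (n : ℝ) ^ (m - 1) * q ^ (n - 1) * Real.exp 1 := by
        apply mul_le_mul_of_nonneg_left (aux_sum _) (by positivity)
    _ = Real.exp 1 * (n : ℝ) ^ (m - 1) * q ^ (n - 1) := by ring
end

section
/- Let m ≥ 2 and n > 2m² be integers with m < √n. Then for every λ ∈ [0,1], if |r − (n−m)/((n−1)m)| < (1−λ)√((m−1)(n−m))/(m(n−1)^{3/2}), then r ∈ (1/(m+1), 1/m], and writing t = 1/m − r, the function f_{m,n}(t) = C(n,m)(mt)^{m−1}(1−mt)^{n−m} satisfies f_{m,n}(t) > λ · C(n,m)(m−1)^{m−1}(n−m)^{n−m}/(n−1)^{n−1}. -/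
lemma key1 (a : ℕ) (ha : 1 ≤ a) (u : ℝ) (hu : u^2 < (a:ℝ)) :
    (1 - u^2/(a:ℝ)) * Real.exp u ≤ (1 + u/(a:ℝ))^a := by
  have haR : (1:ℝ) ≤ (a:ℝ) := by exact_mod_cast ha
  have ha0 : (0:ℝ) < a := by linarith
  have h1 : -(a:ℝ) < u := by nlinarith
  have h2 : u < (a:ℝ) := by nlinarith
  have hb1 : (0:ℝ) < 1 + u/a := by
    have : -1 < u / (a:ℝ) := by rw [lt_div_iff₀ ha0]; linarith
    linarith
  have hb2 : (0:ℝ) < 1 - u/a := by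
    have : u / (a:ℝ) < 1 := by rw [div_lt_iff₀ ha0]; linarith
    linarith
  have e_exp : (1 - u/(a:ℝ))^a ≤ Real.exp (-u) := by
    have h3 : 1 - u/(a:ℝ) ≤ Real.exp (-(u/a)) := by
      have := Real.add_one_le_exp (-(u/(a:ℝ)))
      linarith
    calc (1 - u/(a:ℝ))^a ≤ (Real.exp (-(u/a)))^a := pow_le_pow_left₀ hb2.le h3 a
      _ = Real.exp (-u) := by
          rw [← Real.exp_nat_mul]
          congr 1
          field_simp
  have e_bern : 1 - u^2/(a:ℝ) ≤ (1 - u/a)^a * (1 + u/a)^a := by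
    have hsq : (u/(a:ℝ))^2 ≤ 2 := by
      have h : (u/(a:ℝ))^2 = u^2/a^2 := by ring
      rw [h, div_le_iff₀ (by positivity)]
      nlinarith
    have hber := one_add_mul_le_pow (a := -(u/(a:ℝ))^2) (by linarith) a
    have heq2 : 1 + (a:ℝ) * (-(u/a)^2) = 1 - u^2/a := by
      field_simp
      ring
    have heq3 : ((1 - u/(a:ℝ)) * (1 + u/a)) = 1 + -(u/a)^2 := by ring
    rw [← mul_pow, heq3]
    linarith [heq2.symm.trans_le hber]
  calc (1 - u^2/(a:ℝ)) * Real.exp u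
      ≤ ((1 - u/a)^a * (1 + u/a)^a) * Real.exp u := by
        exact mul_le_mul_of_nonneg_right e_bern (Real.exp_pos u).le
    _ ≤ (Real.exp (-u) * (1 + u/a)^a) * Real.exp u := by
        gcongr
    _ = (1 + u/a)^a := by
        rw [Real.exp_neg]
        have := (Real.exp_pos u).ne'
        field_simp

lemma key2 (a b : ℕ) (ha : 1 ≤ a) (hb : 1 ≤ b) (u : ℝ) (hua : u^2 < (a:ℝ)) (hub : u^2 < (b:ℝ)) :
    1 - u^2/(a:ℝ) - u^2/(b:ℝ) ≤ (1 + u/(a:ℝ))^a * (1 - u/(b:ℝ))^b := by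
  have h1 := key1 a ha u hua
  have h2 := key1 b hb (-u) (by rw [neg_pow]; simpa using hub)
  have hrw : (1 - (-u)^2/(b:ℝ)) = 1 - u^2/(b:ℝ) := by ring
  have hrw2 : (1 + -u/(b:ℝ))^b = (1 - u/(b:ℝ))^b := by ring_nf
  rw [hrw, hrw2] at h2
  have hb0 : (0:ℝ) < b := by
    have : (1:ℝ) ≤ (b:ℝ) := by exact_mod_cast hb
    linarith
  have ha0 : (0:ℝ) < a := by
    have : (1:ℝ) ≤ (a:ℝ) := by exact_mod_cast ha
    linarith
  have ea : (0:ℝ) ≤ 1 - u^2/(a:ℝ) := by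
    rw [sub_nonneg, div_le_one ha0]; exact hua.le
  have eb : (0:ℝ) ≤ 1 - u^2/(b:ℝ) := by
    rw [sub_nonneg, div_le_one hb0]; exact hub.le
  have haR : (1:ℝ) ≤ (a:ℝ) := by exact_mod_cast ha
  have hu1a : (0:ℝ) ≤ 1 + u/(a:ℝ) := by
    have h1' : -(a:ℝ) < u := by nlinarith [hua, haR, sq_nonneg (u + (a:ℝ))]
    have : -1 < u / (a:ℝ) := by rw [lt_div_iff₀ ha0]; linarith
    linarith
  have hmul := mul_le_mul h1 h2
    (mul_nonneg eb (Real.exp_pos (-u)).le) (pow_nonneg hu1a a)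
  have heq : ((1 - u^2/(a:ℝ)) * Real.exp u) * ((1 - u^2/(b:ℝ)) * Real.exp (-u))
      = (1 - u^2/(a:ℝ)) * (1 - u^2/(b:ℝ)) := by
    rw [Real.exp_neg]
    have := (Real.exp_pos u).ne'
    field_simp
  rw [heq] at hmul
  nlinarith [mul_nonneg (div_nonneg (sq_nonneg u) ha0.le) (div_nonneg (sq_nonneg u) hb0.le)]

set_option maxHeartbeats 2000000 in
/-- For integers `m ≥ 2`, `n > 2m²`, `m < √n`, and `λ ∈ [0,1]`: if
`|r - (n-m)/((n-1)m)| < (1-λ)√((m-1)(n-m))/(m(n-1)^(3/2))` then `r ∈ (1/(m+1), 1/m]` and,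
with `t = 1/m - r`, `f_{m,n}(t) = C(n,m)(mt)^(m-1)(1-mt)^(n-m)` satisfies
`f_{m,n}(t) > λ · C(n,m)(m-1)^(m-1)(n-m)^(n-m)/(n-1)^(n-1)`. -/
theorem stmt19 (m n : ℕ) (hm : 2 ≤ m) (hmn : (m : ℝ) < Real.sqrt n) (hn : 2 * m ^ 2 < n)
    (lam : ℝ) (hlam : lam ∈ Set.Icc (0:ℝ) 1) (r : ℝ)
    (hr : |r - ((n : ℝ) - m) / (((n : ℝ) - 1) * m)| <
      (1 - lam) * Real.sqrt (((m : ℝ) - 1) * ((n : ℝ) - m)) /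
        ((m : ℝ) * ((n : ℝ) - 1) ^ ((3 : ℝ) / 2))) :
    r ∈ Set.Ioc (1 / ((m : ℝ) + 1)) (1 / (m : ℝ)) ∧
    (n.choose m : ℝ) * ((m : ℝ) * (1 / (m : ℝ) - r)) ^ (m - 1) *
        (1 - (m : ℝ) * (1 / (m : ℝ) - r)) ^ (n - m)
      > lam * ((n.choose m : ℝ) * ((m : ℝ) - 1) ^ (m - 1) * ((n : ℝ) - m) ^ (n - m) /
          ((n : ℝ) - 1) ^ (n - 1)) := by
  obtain ⟨hl0, hl1⟩ := hlam
  have hl1' : (0:ℝ) ≤ 1 - lam := by linarith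
  have hm2 : (2:ℝ) ≤ (m:ℝ) := by exact_mod_cast hm
  have hmn2 : m < n := by nlinarith
  have hnm4 : 2 * m^2 + 1 ≤ n := hn
  have hnR : 2*(m:ℝ)^2 + 1 ≤ (n:ℝ) := by exact_mod_cast hnm4
  have hm0 : (0:ℝ) < m := by linarith
  set A : ℝ := (m:ℝ) - 1 with hA
  set B : ℝ := (n:ℝ) - (m:ℝ) with hB
  set N : ℝ := (n:ℝ) - 1 with hN
  have hA1 : (1:ℝ) ≤ A := by rw [hA]; linarith
  have hA0 : (0:ℝ) < A := by linarith
  have hB6 : (6:ℝ) ≤ B := by rw [hB]; nlinarith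
  have hB0 : (0:ℝ) < B := by linarith
  have hNAB : N = A + B := by rw [hA, hB, hN]; ring
  have hN0 : (0:ℝ) < N := by rw [hNAB]; linarith
  set C : ℝ := (n.choose m : ℝ) with hC
  have hC0 : (0:ℝ) < C := by
    rw [hC]; exact_mod_cast Nat.choose_pos hmn2.le
  set u : ℝ := N * m * (B / (N * m) - r) with hu
  clear_value A B N C u
  have hsN : (0:ℝ) < Real.sqrt N := Real.sqrt_pos.mpr hN0
  have habs : |u| < (1 - lam) * Real.sqrt (A*B) / Real.sqrt N := by
    have h32 : N ^ ((3:ℝ)/2) = N * Real.sqrt N := by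
      rw [show ((3:ℝ)/2) = 1 + 1/2 by norm_num, Real.rpow_add hN0, Real.rpow_one,
        ← Real.sqrt_eq_rpow]
    have habs1 : |u| = N * m * |r - B/(N*m)| := by
      rw [hu, abs_mul, abs_of_pos (by positivity : (0:ℝ) < N*m), abs_sub_comm]
    rw [habs1]
    calc N*m*|r - B/(N*m)| < N*m*((1-lam)*Real.sqrt (A*B)/(m*N^((3:ℝ)/2))) :=
          mul_lt_mul_of_pos_left hr (by positivity)
      _ = (1-lam)*Real.sqrt (A*B)/Real.sqrt N := by
          rw [h32]
          field_simp
  have hu2 : u^2 < (1-lam)^2 * (A*B/N) := by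
    calc u^2 = |u|^2 := (sq_abs u).symm
      _ < ((1-lam)*Real.sqrt (A*B)/Real.sqrt N)^2 := by
          apply pow_lt_pow_left₀ habs (abs_nonneg u)
          norm_num
      _ = (1-lam)^2 * (A*B/N) := by
          rw [div_pow, mul_pow, Real.sq_sqrt (by positivity : (0:ℝ) ≤ A*B),
            Real.sq_sqrt hN0.le]
          ring
  have hABN : (0:ℝ) < A*B/N := by positivity
  have hu2' : u^2 < A*B/N := by
    have h1 : (1-lam)^2 ≤ 1 := by nlinarith [mul_nonneg hl0 hl1']
    nlinarith [mul_le_mul_of_nonneg_right h1 hABN.le]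
  have hBN : B ≤ N := by rw [hNAB]; linarith
  have hAN : A ≤ N := by rw [hNAB]; linarith
  have huA : u^2 < A :=
    lt_of_lt_of_le hu2' ((div_le_iff₀ hN0).mpr (mul_le_mul_of_nonneg_left hBN hA0.le))
  have huB : u^2 < B :=
    lt_of_lt_of_le hu2' ((div_le_iff₀ hN0).mpr (by
      calc A*B ≤ N*B := mul_le_mul_of_nonneg_right hAN hB0.le
        _ = B*N := by ring))
  have hrval : r = (B - u)/(N*m) := by
    rw [hu]
    field_simp
    ring
  have hmem : r ∈ Set.Ioc (1 / ((m : ℝ) + 1)) (1 / (m : ℝ)) := by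
    constructor
    · rw [hrval, div_lt_div_iff₀ (by positivity) (by positivity)]
      have h1 : u*((m:ℝ)+1) < (m:ℝ)^2 := by
        rcases le_or_gt u 0 with h | h
        · nlinarith
        · nlinarith [huA, sq_nonneg (u*((m:ℝ)+1) + (m:ℝ)^2)]
      nlinarith [h1]
    · rw [hrval, div_le_div_iff₀ (by positivity) hm0]
      have h2 : -A < u := by nlinarith [huA, sq_nonneg (u + A)]
      nlinarith [h2]
  refine ⟨hmem, ?_⟩
  -- cast equalities
  have h1m : 1 ≤ m := by omega
  have hca : ((m-1 : ℕ):ℝ) = A := by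
    rw [hA, Nat.cast_sub h1m, Nat.cast_one]
  have hcb : ((n-m : ℕ):ℝ) = B := by
    rw [hB, Nat.cast_sub hmn2.le]
  have hs : (m:ℝ) * (1/(m:ℝ) - r) = (A + u)/N := by
    rw [hrval, hNAB]
    field_simp
    try ring
  have h1s : (1:ℝ) - (A+u)/N = (B - u)/N := by
    rw [hNAB]
    field_simp
    try ring
  have hk := key2 (m-1) (n-m) (by omega) (by omega) u
    (by rw [hca]; exact huA) (by rw [hcb]; exact huB)
  rw [hca, hcb] at hk
  have hsum : u^2/A + u^2/B < (1-lam)^2 := by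
    have e : u^2/A + u^2/B = u^2 * N/(A*B) := by
      rw [hNAB]; field_simp; ring
    rw [e, div_lt_iff₀ (by positivity)]
    have e2 : (1-lam)^2*(A*B/N)*N = (1-lam)^2*(A*B) := by
      field_simp
    nlinarith [mul_lt_mul_of_pos_right hu2 hN0]
  have hratio : lam < (1 + u/A)^(m-1) * (1 - u/B)^(n-m) := by
    nlinarith [hk, hsum, mul_nonneg hl0 hl1']
  have hK : (0:ℝ) < C * A^(m-1) * B^(n-m) / N^((m-1)+(n-m)) := by positivity
  have hfin := mul_lt_mul_of_pos_left hratio hK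
  have hexp : n - 1 = (m-1) + (n-m) := by omega
  rw [hs, h1s, hexp]
  have eqL : C * ((A+u)/N)^(m-1) * ((B-u)/N)^(n-m)
      = (C * A^(m-1) * B^(n-m) / N^((m-1)+(n-m))) * ((1+u/A)^(m-1) * (1-u/B)^(n-m)) := by
    have e1 : (A+u)/N = A/N * (1+u/A) := by field_simp
    have e2 : (B-u)/N = B/N * (1-u/B) := by field_simp
    rw [e1, e2, mul_pow, mul_pow, div_pow, div_pow, pow_add]
    field_simp
  rw [eqL]
  calc lam * (C * A^(m-1) * B^(n-m) / N^((m-1)+(n-m)))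
      = (C * A^(m-1) * B^(n-m) / N^((m-1)+(n-m))) * lam := by ring
    _ < _ := hfin
end
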